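/- arXiv:2603.08446 — 6 statements merged into one kernel-verified Lean document; each statement's English description precedes it below -/
import Mathlib

section
/- Let (Ω, F, μ) be a probability space with a filtration {F_k}_{k≥0} of sub-σ-algebras whose union generates F, and fix r ∈ (0,1). For every measurable function f : Ω → ℝ and every λ ≥ 0, one has μ({x : P_r f(x) > λ}) ≤ (1/r) · μ({x : |f(x)| > λ}), where P_r f := sup_{k≥0} P_k^r |f| is the percentile maximal function. -/
open MeasureTheory
open scoped ENNReal NNReal

noncomputable def condPercentile {Ω : Type*} {m0 : MeasurableSpace Ω} (μ : Measure Ω)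
    (ℱ : Filtration ℕ m0) (r : ℝ) (k : ℕ) (g : Ω → ℝ) (x : Ω) : ℝ :=
  sInf {t : ℝ | ∃ q : ℚ, t = (q : ℝ) ∧
    (μ[Set.indicator {y | g y > (q : ℝ)} (fun _ => (1 : ℝ)) | ℱ k]) x ≤ r}

noncomputable def percentileMax {Ω : Type*} {m0 : MeasurableSpace Ω} (μ : Measure Ω)
    (ℱ : Filtration ℕ m0) (r : ℝ) (f : Ω → ℝ) (x : Ω) : ℝ :=
  ⨆ k : ℕ, condPercentile μ ℱ r k (fun y => |f y|) x

/-- Doob-type maximal inequality for conditional expectations of an indicator. -/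
lemma aux_max_ineq {Ω : Type*} {m0 : MeasurableSpace Ω} (μ : Measure Ω)
    [IsProbabilityMeasure μ] (ℱ : Filtration ℕ m0) {r : ℝ} (hr : 0 < r)
    {A : Set Ω} (hA : MeasurableSet A) :
    μ {x | ∃ k, r < (μ[A.indicator (fun _ => (1 : ℝ)) | ℱ k]) x} ≤
      ENNReal.ofReal (1 / r) * μ A := by
  set g : Ω → ℝ := A.indicator (fun _ => (1 : ℝ)) with hg
  have hgint : Integrable g μ := (integrable_const (1 : ℝ)).indicator hA
  set M : ℕ → Ω → ℝ := fun k => μ[g | ℱ k] with hM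
  set M' : ℕ → Ω → ℝ := fun k ω => max (M k ω) 0 with hM'
  have hMnn : ∀ k, 0 ≤ᵐ[μ] M k := fun k =>
    condExp_nonneg (Filter.Eventually.of_forall fun ω =>
      Set.indicator_nonneg (fun _ _ => zero_le_one) ω)
  have hMM' : ∀ k, M k =ᵐ[μ] M' k := fun k =>
    (hMnn k).mono fun ω hω => (max_eq_left hω).symm
  have hsub : Submartingale M' ℱ μ := by
    refine ⟨fun k => ?_, ?_, ?_⟩
    · show StronglyMeasurable[ℱ k] (M' k)
      exact (continuous_id.max continuous_const).comp_stronglyMeasurable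
        stronglyMeasurable_condExp
    · intro i j hij
      have h1 : μ[M' j | ℱ i] =ᵐ[μ] μ[M j | ℱ i] := condExp_congr_ae (hMM' j).symm
      have h2 : μ[M j | ℱ i] =ᵐ[μ] M i := condExp_condExp_of_le (ℱ.mono hij) (ℱ.le j)
      filter_upwards [h1, h2, hMM' i] with ω e1 e2 e3
      rw [e1, e2, ← e3]
    · intro i
      exact (integrable_condExp).pos_part
  set ε : ℝ≥0 := r.toNNReal with hε
  have hεr : (ε : ℝ) = r := Real.coe_toNNReal r hr.le
  set S : ℕ → Set Ω := fun n =>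
    {ω | (ε : ℝ) ≤ (Finset.range (n + 1)).sup' Finset.nonempty_range_add_one fun k => M' k ω}
    with hS
  have hofr : (ε : ℝ≥0∞) = ENNReal.ofReal r := by
    rw [ENNReal.ofReal]
  have key : ∀ n, ENNReal.ofReal r * μ (S n) ≤ μ A := by
    intro n
    have h1 := maximal_ineq (μ := μ) hsub (fun k ω => le_max_right (M k ω) 0) (ε := ε) n
    have h2 : ∫ ω in S n, M' n ω ∂μ ≤ ∫ ω, M' n ω ∂μ :=
      setIntegral_le_integral (integrable_condExp.pos_part)
        (Filter.Eventually.of_forall fun ω => le_max_right _ _)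
    have h3 : ∫ ω, M' n ω ∂μ = (μ A).toReal := by
      rw [← integral_congr_ae (hMM' n), hM]
      rw [integral_condExp (ℱ.le n), hg, integral_indicator_const (1 : ℝ) hA]
      simp [Measure.real]
    calc ENNReal.ofReal r * μ (S n) = ε • μ (S n) := by rw [ENNReal.smul_def, hofr, smul_eq_mul]
      _ ≤ ENNReal.ofReal (∫ ω in S n, M' n ω ∂μ) := h1
      _ ≤ ENNReal.ofReal ((μ A).toReal) := ENNReal.ofReal_le_ofReal (h3 ▸ h2)
      _ = μ A := ENNReal.ofReal_toReal (measure_ne_top μ A)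
  have hsubset : {x | ∃ k, r < M k x} ⊆ ⋃ n, S n := by
    intro x ⟨k, hk⟩
    refine Set.mem_iUnion.2 ⟨k, ?_⟩
    simp only [hS, Set.mem_setOf_eq, hεr]
    exact le_trans (le_of_lt (lt_of_lt_of_le hk (le_max_left _ _)))
      (Finset.le_sup' (fun j => M' j x) (Finset.self_mem_range_succ k))
  have hdir : Directed (· ⊆ ·) S := by
    refine directed_of_isDirected_le ?_
    intro n m hnm x hx
    simp only [hS, Set.mem_setOf_eq] at hx ⊢
    refine le_trans hx ?_
    obtain ⟨j, hj, hj2⟩ := Finset.exists_mem_eq_sup' Finset.nonempty_range_add_one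
      (fun k => M' k x)
    rw [hj2]
    exact Finset.le_sup' (fun k => M' k x)
      (Finset.mem_range.2 (lt_of_lt_of_le (Finset.mem_range.1 hj) (by omega)))
  calc μ {x | ∃ k, r < M k x} ≤ μ (⋃ n, S n) := measure_mono hsubset
    _ = ⨆ n, μ (S n) := hdir.measure_iUnion
    _ ≤ ENNReal.ofReal (1 / r) * μ A := by
        refine iSup_le fun n => ?_
        have h0 : ENNReal.ofReal r ≠ 0 := (ENNReal.ofReal_pos.2 hr).ne'
        have := mul_le_mul_right (key n) (ENNReal.ofReal r)⁻¹
        rwa [← mul_assoc, ENNReal.inv_mul_cancel h0 ENNReal.ofReal_ne_top, one_mul,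
          ← ENNReal.ofReal_inv_of_pos hr, inv_eq_one_div] at this

theorem stmt0 {Ω : Type*} {m0 : MeasurableSpace Ω} (μ : Measure Ω) [IsProbabilityMeasure μ]
    (ℱ : Filtration ℕ m0) (hgen : (⨆ k, (ℱ k : MeasurableSpace Ω)) = m0)
    (r : ℝ) (hr : r ∈ Set.Ioo (0 : ℝ) 1)
    (f : Ω → ℝ) (hf : Measurable f) (lam : ℝ) (hlam : 0 ≤ lam) :
    μ {x | percentileMax μ ℱ r f x > lam} ≤ ENNReal.ofReal (1 / r) * μ {x | |f x| > lam} := by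
  obtain ⟨hr0, hr1⟩ := hr
  set g : ℚ → Ω → ℝ := fun q => Set.indicator {y | |f y| > (q : ℝ)} (fun _ => (1 : ℝ)) with hgdef
  have hAmeas : ∀ q : ℚ, MeasurableSet {y | |f y| > (q : ℝ)} := fun q =>
    measurableSet_lt measurable_const hf.abs
  have hgint : ∀ q : ℚ, Integrable (g q) μ := fun q =>
    (integrable_const (1 : ℝ)).indicator (hAmeas q)
  -- a.e. monotonicity of conditional expectations in q
  have hmono : ∀ᵐ x ∂μ, ∀ (q q' : ℚ) (k : ℕ), q ≤ q' →
      (μ[g q' | ℱ k]) x ≤ (μ[g q | ℱ k]) x := by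
    rw [ae_all_iff]; intro q
    rw [ae_all_iff]; intro q'
    rw [ae_all_iff]; intro k
    by_cases h : q ≤ q'
    · have hle : g q' ≤ᵐ[μ] g q :=
        Filter.Eventually.of_forall fun y =>
          Set.indicator_le_indicator_apply_of_subset
            (fun z hz => show (q:ℝ) < |f z| from lt_of_le_of_lt (Rat.cast_le.mpr h) hz) zero_le_one
      filter_upwards [condExp_mono (hgint q') (hgint q) hle] with x hx
      exact fun _ => hx
    · exact Filter.Eventually.of_forall fun x h' => absurd h' h
  set P : Ω → Prop := fun x => ∀ (q q' : ℚ) (k : ℕ), q ≤ q' →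
      (μ[g q' | ℱ k]) x ≤ (μ[g q | ℱ k]) x with hPdef
  set T : {q : ℚ // lam < (q : ℝ)} → Set Ω :=
    fun q => {x | P x ∧ ∃ k, r < (μ[g q.1 | ℱ k]) x} with hTdef
  have hincl : {x | percentileMax μ ℱ r f x > lam} ⊆ {x | ¬ P x} ∪ ⋃ q, T q := by
    intro x hx
    by_cases hPx : P x
    · right
      have h1 : ∃ k, lam < condPercentile μ ℱ r k (fun y => |f y|) x := by
        by_contra h; push_neg at h
        exact absurd (Real.iSup_le h hlam) (not_le.2 hx)
      obtain ⟨k, hk⟩ := h1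
      set S : Set ℝ := {t : ℝ | ∃ q : ℚ, t = (q : ℝ) ∧
        (μ[Set.indicator {y | |f y| > (q : ℝ)} (fun _ => (1 : ℝ)) | ℱ k]) x ≤ r} with hSdef
      have hkS : lam < sInf S := hk
      have hS1 : S.Nonempty := by
        by_contra h
        rw [Set.not_nonempty_iff_eq_empty] at h
        rw [h, Real.sInf_empty] at hkS; linarith
      have hS2 : BddBelow S := by
        by_contra h
        rw [Real.sInf_of_not_bddBelow h] at hkS; linarith
      obtain ⟨q, hq1, hq2⟩ := exists_rat_btwn hkS
      have hqS : ((q : ℝ)) ∉ S := fun hmem => absurd (csInf_le hS2 hmem) (not_le.2 hq2)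
      have hqr : r < (μ[g q | ℱ k]) x := by
        by_contra h; push_neg at h
        exact hqS ⟨q, rfl, h⟩
      exact Set.mem_iUnion.2 ⟨⟨q, hq1⟩, hPx, k, hqr⟩
    · left; exact hPx
  have hnull : μ {x | ¬ P x} = 0 := by
    have := hmono
    rwa [← ae_iff.symm] at this
  have hdir : Directed (· ⊆ ·) T := by
    intro a b
    rcases le_total a.1 b.1 with h | h
    · refine ⟨a, subset_rfl, ?_⟩
      rintro x ⟨hPx, k, hk⟩
      exact ⟨hPx, k, lt_of_lt_of_le hk (hPx a.1 b.1 k h)⟩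
    · refine ⟨b, ?_, subset_rfl⟩
      rintro x ⟨hPx, k, hk⟩
      exact ⟨hPx, k, lt_of_lt_of_le hk (hPx b.1 a.1 k h)⟩
  calc μ {x | percentileMax μ ℱ r f x > lam}
      ≤ μ ({x | ¬ P x} ∪ ⋃ q, T q) := measure_mono hincl
    _ ≤ μ {x | ¬ P x} + μ (⋃ q, T q) := measure_union_le _ _
    _ = μ (⋃ q, T q) := by rw [hnull, zero_add]
    _ = ⨆ q, μ (T q) := hdir.measure_iUnion
    _ ≤ ENNReal.ofReal (1 / r) * μ {x | |f x| > lam} := by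
        refine iSup_le fun q => ?_
        have h1 : μ (T q) ≤ μ {x | ∃ k, r < (μ[g q.1 | ℱ k]) x} :=
          measure_mono fun x hx => hx.2
        have h2 := aux_max_ineq μ ℱ hr0 (hAmeas q.1)
        have h3 : μ {y | |f y| > (q.1 : ℝ)} ≤ μ {x | |f x| > lam} :=
          measure_mono fun y hy => lt_trans q.2 hy
        exact le_trans h1 (le_trans h2 (mul_le_mul_right h3 _))
end

section
/- Let (Ω, F, μ) be a probability space with a filtration {F_k}_{k≥0} of sub-σ-algebras whose union generates F, and fix r ∈ (0,1). For every p ∈ (0,∞) and every f ∈ L^p(Ω), one has ‖P_r f‖_{L^p(Ω)} ≤ r^{−1/p} ‖f‖_{L^p(Ω)}, where P_r f := sup_{k≥0} P_k^r |f| is the percentile maximal function. -/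
open MeasureTheory
open scoped ENNReal

set_option maxHeartbeats 2000000
set_option synthInstance.maxHeartbeats 400000

/-- Doob's maximal inequality for the conditional expectations of a nonnegative
integrable function. -/
lemma doob_aux {Ω : Type*} {m0 : MeasurableSpace Ω} (μ : Measure Ω) [IsProbabilityMeasure μ]
    (ℱ : Filtration ℕ m0) {r : ℝ} (hr : 0 < r) {h : Ω → ℝ} (hint : Integrable h μ)
    (h0 : 0 ≤ᵐ[μ] h) :
    ENNReal.ofReal r * μ (⋃ k, {x | r < (μ[h | ℱ k]) x}) ≤ ENNReal.ofReal (∫ x, h x ∂μ) := by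
  set g : ℕ → Ω → ℝ := fun k => μ[h | ℱ k] with hg
  have hmart : Martingale g ℱ μ := martingale_condExp h ℱ μ
  have hsub : Submartingale (g⁺) ℱ μ := hmart.submartingale.pos
  have hnn : 0 ≤ (g⁺) := fun k ω => posPart_nonneg _
  set W : ℕ → Set Ω := fun n => {ω | r ≤ (Finset.range (n+1)).sup' Finset.nonempty_range_add_one
      fun k => (g⁺) k ω} with hW
  have hWmono : Monotone W := by
    intro a b hab x hx
    simp only [hW, Set.mem_setOf_eq] at hx ⊢
    exact le_trans hx (Finset.sup'_mono (fun j => (g⁺) j x)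
      (Finset.range_subset_range.2 (Nat.succ_le_succ hab)) Finset.nonempty_range_add_one)
  have hsubset : (⋃ k, {x | r < g k x}) ⊆ ⋃ n, W n := by
    rintro x ⟨s, ⟨k, rfl⟩, hx⟩
    refine Set.mem_iUnion.2 ⟨k, ?_⟩
    have h1 : g k x ≤ (g⁺) k x := le_posPart _
    have h2 : (g⁺) k x ≤ (Finset.range (k+1)).sup' Finset.nonempty_range_add_one fun j => (g⁺) j x :=
      Finset.le_sup' (fun j => (g⁺) j x) (Finset.self_mem_range_succ k)
    exact le_trans (le_of_lt hx) (le_trans h1 h2)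
  have hcalc : ∀ n, ENNReal.ofReal r * μ (W n) ≤ ENNReal.ofReal (∫ x, h x ∂μ) := by
    intro n
    have hmax := maximal_ineq (μ := μ) hsub hnn (ε := r.toNNReal) n
    rw [Real.coe_toNNReal r hr.le] at hmax
    have e1 : ENNReal.ofReal r * μ (W n) ≤
        ENNReal.ofReal (∫ ω in W n, (g⁺) n ω ∂μ) := hmax
    refine e1.trans (ENNReal.ofReal_le_ofReal ?_)
    have hnn' : 0 ≤ᵐ[μ] (g⁺) n := Filter.Eventually.of_forall fun ω => posPart_nonneg _
    have e2 : ∫ ω in W n, (g⁺) n ω ∂μ ≤ ∫ ω, (g⁺) n ω ∂μ :=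
      setIntegral_le_integral (hsub.integrable n) hnn'
    have e3 : ∫ ω, (g⁺) n ω ∂μ = ∫ ω, g n ω ∂μ := by
      refine integral_congr_ae ?_
      filter_upwards [condExp_nonneg h0 (m := ℱ n)] with ω hω
      exact posPart_eq_self.2 hω
    have e4 : ∫ ω, g n ω ∂μ = ∫ x, h x ∂μ := integral_condExp (ℱ.le n)
    linarith
  calc ENNReal.ofReal r * μ (⋃ k, {x | r < g k x})
      ≤ ENNReal.ofReal r * μ (⋃ n, W n) := mul_le_mul_right (measure_mono hsubset) _
    _ = ENNReal.ofReal r * ⨆ n, μ (W n) := by rw [hWmono.measure_iUnion]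
    _ = ⨆ n, ENNReal.ofReal r * μ (W n) := by rw [ENNReal.mul_iSup]
    _ ≤ ENNReal.ofReal (∫ x, h x ∂μ) := iSup_le hcalc

theorem stmt1 {Ω : Type*} {m0 : MeasurableSpace Ω} (μ : Measure Ω) [IsProbabilityMeasure μ]
    (ℱ : Filtration ℕ m0) (hgen : (⨆ k, (ℱ k : MeasurableSpace Ω)) = m0)
    (r : ℝ) (hr : r ∈ Set.Ioo (0 : ℝ) 1)
    (p : ℝ) (hp : 0 < p)
    (f : Ω → ℝ) (hf : MemLp f (ENNReal.ofReal p) μ) :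
    eLpNorm (percentileMax μ ℱ r f) (ENNReal.ofReal p) μ ≤
      ENNReal.ofReal (r ^ (-(1 / p))) * eLpNorm f (ENNReal.ofReal p) μ := by
  obtain ⟨hr0, hr1⟩ := hr
  have hfm : AEMeasurable f μ := hf.aestronglyMeasurable.aemeasurable
  set φ : Ω → ℝ := hfm.mk f with hφ
  have hφm : Measurable φ := hfm.measurable_mk
  have hfφ : f =ᵐ[μ] φ := hfm.ae_eq_mk
  -- the conditional distribution functions
  set E : ℚ → ℕ → Ω → ℝ :=
    fun q k => μ[Set.indicator {y | |f y| > (q : ℝ)} (fun _ => (1 : ℝ)) | ℱ k] with hE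
  set ind : ℚ → Ω → ℝ := fun q => Set.indicator {y | |f y| > (q : ℝ)} (fun _ => (1 : ℝ))
    with hind
  have hind_eq : ∀ q : ℚ, ind q =ᵐ[μ]
      Set.indicator {y | |φ y| > (q : ℝ)} (fun _ => (1 : ℝ)) := by
    intro q
    filter_upwards [hfφ] with y hy
    simp only [hind, Set.indicator, Set.mem_setOf_eq, hy]
  have hind_int : ∀ q : ℚ, Integrable (ind q) μ := by
    intro q
    refine Integrable.congr ?_ (hind_eq q).symm
    exact (integrable_const (1 : ℝ)).indicator
      (measurableSet_lt measurable_const hφm.abs)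
  have hind_nn : ∀ q : ℚ, 0 ≤ᵐ[μ] ind q :=
    fun q => Filter.Eventually.of_forall fun y => Set.indicator_nonneg (fun _ _ => zero_le_one) y
  -- the exceptional-set union
  set U : ℚ → Set Ω := fun q => ⋃ k, {x | r < E q k x} with hU
  have hEmeas : ∀ q k, Measurable (E q k) :=
    fun q k => (stronglyMeasurable_condExp.mono (ℱ.le k)).measurable
  have hUmeas : ∀ q, MeasurableSet (U q) :=
    fun q => MeasurableSet.iUnion fun k => measurableSet_lt measurable_const (hEmeas q k)
  set G : Ω → ℝ≥0∞ := fun x => ⨆ q : ℚ, (U q).indicator (fun _ => ENNReal.ofReal q) x with hG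
  have hGmeas : Measurable G :=
    Measurable.iSup fun q => Measurable.indicator measurable_const (hUmeas q)
  -- Step A: a.e. domination of the percentile maximal function by G
  have hneg : ∀ᵐ x ∂μ, ∀ (q : ℚ) (k : ℕ), (q : ℝ) < 0 → E q k x = 1 := by
    rw [ae_all_iff]
    intro q
    rw [ae_all_iff]
    intro k
    by_cases hq : (q : ℝ) < 0
    · have huniv : {y : Ω | |f y| > (q : ℝ)} = Set.univ :=
        Set.eq_univ_of_forall fun y => lt_of_lt_of_le hq (abs_nonneg _)
      have : E q k =ᵐ[μ] fun _ => (1 : ℝ) := by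
        have h2 : (Set.indicator {y : Ω | |f y| > (q : ℝ)} (fun _ => (1 : ℝ)))
            = fun _ => (1 : ℝ) := by rw [huniv]; exact Set.indicator_univ _
        have h1 : E q k = μ[fun _ => (1 : ℝ) | ℱ k] := by
          simp only [hE, h2]
        rw [h1]
        exact Filter.EventuallyEq.of_eq (condExp_const (μ := μ) (ℱ.le k) (1 : ℝ))
      filter_upwards [this] with x hx
      intro _
      exact hx
    · exact Filter.Eventually.of_forall fun x hq' => absurd hq' hq
  have hA : ∀ᵐ x ∂μ, 0 ≤ percentileMax μ ℱ r f x ∧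
      ENNReal.ofReal (percentileMax μ ℱ r f x) ≤ G x := by
    filter_upwards [hneg] with x hx
    have hSnn : ∀ (k : ℕ) (t : ℝ),
        t ∈ {t : ℝ | ∃ q : ℚ, t = (q : ℝ) ∧ E q k x ≤ r} → 0 ≤ t := by
      rintro k t ⟨q, rfl, hqr⟩
      by_contra hneg'
      push_neg at hneg'
      rw [hx q k hneg'] at hqr
      linarith
    have hcp : ∀ k, condPercentile μ ℱ r k (fun y => |f y|) x =
        sInf {t : ℝ | ∃ q : ℚ, t = (q : ℝ) ∧ E q k x ≤ r} := fun k => rfl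
    have h0cp : ∀ k, 0 ≤ condPercentile μ ℱ r k (fun y => |f y|) x := by
      intro k
      rw [hcp k]
      exact Real.sInf_nonneg (hSnn k)
    have h0P : 0 ≤ percentileMax μ ℱ r f x := Real.iSup_nonneg h0cp
    refine ⟨h0P, ?_⟩
    -- key claim: rational 0 ≤ t < P x implies x ∈ U t
    have hkey : ∀ t : ℚ, 0 ≤ (t : ℝ) → (t : ℝ) < percentileMax μ ℱ r f x → x ∈ U t := by
      intro t ht0 htP
      have : ∃ k, (t : ℝ) < condPercentile μ ℱ r k (fun y => |f y|) x :=
        exists_lt_of_lt_ciSup htP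
      obtain ⟨k, hk⟩ := this
      rw [hcp k] at hk
      by_contra hxU
      have hEr : E t k x ≤ r := by
        simp only [hU, Set.mem_iUnion, Set.mem_setOf_eq, not_exists, not_lt] at hxU
        exact hxU k
      have hmem : (t : ℝ) ∈ {s : ℝ | ∃ q : ℚ, s = (q : ℝ) ∧ E q k x ≤ r} := ⟨t, rfl, hEr⟩
      have := csInf_le ⟨0, hSnn k⟩ hmem
      linarith
    rcases eq_or_lt_of_le h0P with hP0 | hP0
    · rw [← hP0]; simp
    · refine le_of_forall_lt fun c hc => ?_
      have hcne : c ≠ ∞ := by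
        intro hctop
        rw [hctop] at hc
        exact (not_top_lt hc).elim
      have hcR : c.toReal < percentileMax μ ℱ r f x := by
        have := ENNReal.toReal_lt_toReal hcne ENNReal.ofReal_ne_top |>.mpr hc
        rwa [ENNReal.toReal_ofReal h0P] at this
      obtain ⟨t, ht1, ht2⟩ := exists_rat_btwn (max_lt hcR hP0)
      have htpos : 0 < (t : ℝ) := lt_of_le_of_lt (le_max_right _ _) ht1
      have ht0 : 0 ≤ (t : ℝ) := htpos.le
      have hxU := hkey t ht0 ht2
      have : ENNReal.ofReal t ≤ G x := by
        rw [hG]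
        refine le_trans ?_ (le_iSup _ t)
        rw [Set.indicator_of_mem hxU]
      refine lt_of_lt_of_le ?_ this
      rw [← ENNReal.ofReal_toReal hcne]
      exact (ENNReal.ofReal_lt_ofReal_iff htpos).mpr
        (lt_of_le_of_lt (le_max_left c.toReal 0) ht1)
  -- Step B: distribution bound for G
  have hAA : ∀ t : ℝ, μ {x | t ≤ |f x|} = μ {x | t ≤ |φ x|} := by
    intro t
    refine measure_congr ?_
    filter_upwards [hfφ] with x hx
    show (t ≤ |f x|) = (t ≤ |φ x|)
    rw [hx]
  have hdist : ∀ t : ℝ, 0 < t →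
      μ {x | ENNReal.ofReal t < G x} ≤ ENNReal.ofReal (1/r) * μ {x | t ≤ |f x|} := by
    intro t ht
    set indA : Ω → ℝ := Set.indicator {x | t ≤ |f x|} (fun _ => (1 : ℝ)) with hindA
    have hindA_eq : indA =ᵐ[μ] Set.indicator {x | t ≤ |φ x|} (fun _ => (1 : ℝ)) := by
      filter_upwards [hfφ] with y hy
      simp only [hindA, Set.indicator, Set.mem_setOf_eq, hy]
    have hAmeas : MeasurableSet {x | t ≤ |φ x|} := measurableSet_le measurable_const hφm.abs
    have hindA_int : Integrable indA μ :=
      ((integrable_const (1 : ℝ)).indicator hAmeas).congr hindA_eq.symm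
    have hindA_nn : 0 ≤ᵐ[μ] indA :=
      Filter.Eventually.of_forall fun y => Set.indicator_nonneg (fun _ _ => zero_le_one) y
    set V : Set Ω := ⋃ k, {x | r < (μ[indA | ℱ k]) x} with hV
    have hmono : ∀ᵐ x ∂μ, ∀ (q : ℚ) (k : ℕ), t < (q : ℝ) → E q k x ≤ (μ[indA | ℱ k]) x := by
      rw [ae_all_iff]; intro q; rw [ae_all_iff]; intro k
      by_cases hq : t < (q : ℝ)
      · have hle : ind q ≤ᵐ[μ] indA := by
          refine Filter.Eventually.of_forall fun y => ?_
          refine Set.indicator_le_indicator_of_subset ?_ (fun _ => zero_le_one) y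
          intro z hz
          simp only [Set.mem_setOf_eq] at hz ⊢
          linarith
        have := condExp_mono (m := ℱ k) (hind_int q) hindA_int hle
        filter_upwards [this] with x hx _
        exact hx
      · exact Filter.Eventually.of_forall fun x hq' => absurd hq' hq
    have hsub2 : ∀ᵐ x ∂μ, x ∈ {x | ENNReal.ofReal t < G x} → x ∈ V := by
      filter_upwards [hmono] with x hx hxG
      simp only [Set.mem_setOf_eq, hG, lt_iSup_iff] at hxG
      obtain ⟨q, hq⟩ := hxG
      by_cases hxU : x ∈ U q
      · rw [Set.indicator_of_mem hxU] at hq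
        have hq0 : 0 < (q : ℝ) := by
          by_contra hcon
          push_neg at hcon
          rw [ENNReal.ofReal_eq_zero.2 hcon] at hq
          simp at hq
        have htq : t < (q : ℝ) := (ENNReal.ofReal_lt_ofReal_iff hq0).1 hq
        obtain ⟨k, hk⟩ := Set.mem_iUnion.1 hxU
        simp only [Set.mem_setOf_eq] at hk
        exact Set.mem_iUnion.2 ⟨k, lt_of_lt_of_le hk (hx q k htq)⟩
      · rw [Set.indicator_of_notMem hxU] at hq
        simp at hq
    have hμsub : μ {x | ENNReal.ofReal t < G x} ≤ μ V := measure_mono_ae hsub2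
    have hdoob := doob_aux μ ℱ hr0 hindA_int hindA_nn
    have hint_eq : ∫ x, indA x ∂μ = (μ {x | t ≤ |φ x|}).toReal := by
      rw [integral_congr_ae hindA_eq, integral_indicator_const (1 : ℝ) hAmeas]
      simp [measureReal_def]
    have h5 : ENNReal.ofReal r * μ V ≤ μ {x | t ≤ |f x|} := by
      rw [hAA t]
      calc ENNReal.ofReal r * μ V ≤ ENNReal.ofReal (∫ x, indA x ∂μ) := hdoob
        _ = ENNReal.ofReal ((μ {x | t ≤ |φ x|}).toReal) := by rw [hint_eq]
        _ = μ {x | t ≤ |φ x|} := ENNReal.ofReal_toReal (measure_ne_top μ _)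
    have hrne0 : ENNReal.ofReal r ≠ 0 := by
      simp only [ne_eq, ENNReal.ofReal_eq_zero, not_le]
      exact hr0
    calc μ {x | ENNReal.ofReal t < G x} ≤ μ V := hμsub
      _ = (ENNReal.ofReal r)⁻¹ * (ENNReal.ofReal r * μ V) := by
          rw [← mul_assoc, ENNReal.inv_mul_cancel hrne0 ENNReal.ofReal_ne_top, one_mul]
      _ ≤ (ENNReal.ofReal r)⁻¹ * μ {x | t ≤ |f x|} := mul_le_mul_right h5 _
      _ = ENNReal.ofReal (1/r) * μ {x | t ≤ |f x|} := by
          rw [one_div, ENNReal.ofReal_inv_of_pos hr0]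
  -- Step C: G is a.e. finite
  have hGfin : ∀ᵐ x ∂μ, G x ≠ ∞ := by
    have hbound : ∀ n : ℕ, μ {x | G x = ∞} ≤
        ENNReal.ofReal (1/r) * μ {x | ((n : ℝ) + 1) ≤ |φ x|} := by
      intro n
      have h1 : {x | G x = ∞} ⊆ {x | ENNReal.ofReal ((n : ℝ) + 1) < G x} := by
        intro x hx
        simp only [Set.mem_setOf_eq] at hx ⊢
        rw [hx]
        exact ENNReal.ofReal_lt_top
      calc μ {x | G x = ∞} ≤ μ {x | ENNReal.ofReal ((n : ℝ) + 1) < G x} := measure_mono h1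
        _ ≤ ENNReal.ofReal (1/r) * μ {x | ((n : ℝ) + 1) ≤ |f x|} :=
            hdist _ (by positivity)
        _ = ENNReal.ofReal (1/r) * μ {x | ((n : ℝ) + 1) ≤ |φ x|} := by rw [hAA]
    have htend : Filter.Tendsto (fun n : ℕ => μ {x | ((n : ℝ) + 1) ≤ |φ x|})
        Filter.atTop (nhds 0) := by
      have hanti : Antitone (fun n : ℕ => {x | ((n : ℝ) + 1) ≤ |φ x|}) := by
        intro a b hab x hx
        simp only [Set.mem_setOf_eq] at hx ⊢
        have : (a : ℝ) ≤ (b : ℝ) := Nat.cast_le.2 hab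
        linarith
      have h2 : (⋂ n : ℕ, {x | ((n : ℝ) + 1) ≤ |φ x|}) = ∅ := by
        ext x
        simp only [Set.mem_iInter, Set.mem_setOf_eq, Set.mem_empty_iff_false, iff_false,
          not_forall, not_le]
        obtain ⟨n, hn⟩ := exists_nat_gt (|φ x|)
        exact ⟨n, by linarith⟩
      have h3 := tendsto_measure_iInter_atTop
        (fun n => (measurableSet_le measurable_const hφm.abs).nullMeasurableSet)
        hanti ⟨0, measure_ne_top μ _⟩
      rw [h2, measure_empty] at h3
      exact h3
    have hzero : μ {x | G x = ∞} = 0 := by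
      have htend2 : Filter.Tendsto
          (fun n : ℕ => ENNReal.ofReal (1/r) * μ {x | ((n : ℝ) + 1) ≤ |φ x|})
          Filter.atTop (nhds (ENNReal.ofReal (1/r) * 0)) :=
        ENNReal.Tendsto.const_mul htend (Or.inr ENNReal.ofReal_ne_top)
      rw [mul_zero] at htend2
      exact le_antisymm (ge_of_tendsto' htend2 hbound) zero_le
    rw [ae_iff]
    simpa using hzero
  -- Step D: assemble via the layer cake formula
  have hp_ne0 : (ENNReal.ofReal p) ≠ 0 := by
    simp only [ne_eq, ENNReal.ofReal_eq_zero, not_le]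
    exact hp
  rw [eLpNorm_eq_lintegral_rpow_enorm_toReal hp_ne0 ENNReal.ofReal_ne_top,
    eLpNorm_eq_lintegral_rpow_enorm_toReal hp_ne0 ENNReal.ofReal_ne_top,
    ENNReal.toReal_ofReal hp.le]
  simp only [enorm_eq_nnnorm]
  set Gr : Ω → ℝ := fun x => (G x).toReal with hGr
  have hGrm : AEMeasurable Gr μ := (hGmeas.ennreal_toReal).aemeasurable
  have hGr_nn : 0 ≤ᵐ[μ] Gr := Filter.Eventually.of_forall fun x => ENNReal.toReal_nonneg
  have key1 : ∫⁻ x, (‖percentileMax μ ℱ r f x‖₊ : ℝ≥0∞) ^ p ∂μ ≤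
      ∫⁻ x, ENNReal.ofReal (Gr x ^ p) ∂μ := by
    refine lintegral_mono_ae ?_
    filter_upwards [hA, hGfin] with x hx hxfin
    obtain ⟨hx0, hxle⟩ := hx
    have h1 : (‖percentileMax μ ℱ r f x‖₊ : ℝ≥0∞) =
        ENNReal.ofReal (percentileMax μ ℱ r f x) := by
      rw [← enorm_eq_nnnorm, ← ofReal_norm, Real.norm_of_nonneg hx0]
    rw [h1]
    have h2 : ENNReal.ofReal (percentileMax μ ℱ r f x) ≤ ENNReal.ofReal (Gr x) := by
      refine le_trans hxle ?_
      rw [hGr, ENNReal.ofReal_toReal hxfin]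
    calc ENNReal.ofReal (percentileMax μ ℱ r f x) ^ p ≤ ENNReal.ofReal (Gr x) ^ p :=
        ENNReal.rpow_le_rpow h2 hp.le
      _ = ENNReal.ofReal (Gr x ^ p) := by
        rw [← ENNReal.ofReal_rpow_of_nonneg ENNReal.toReal_nonneg hp.le]
  have layG := lintegral_rpow_eq_lintegral_meas_lt_mul μ hGr_nn hGrm hp
  have hfabs_nn : 0 ≤ᵐ[μ] fun x => |f x| := Filter.Eventually.of_forall fun x => abs_nonneg _
  have hfabs_m : AEMeasurable (fun x => |f x|) μ :=
    (hφm.abs.aemeasurable).congr (by filter_upwards [hfφ] with x hx; rw [hx])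
  have layF := lintegral_rpow_eq_lintegral_meas_le_mul μ hfabs_nn hfabs_m hp
  have hcomp : ∫⁻ t in Set.Ioi (0:ℝ), μ {a | t < Gr a} * ENNReal.ofReal (t ^ (p-1)) ≤
      ENNReal.ofReal (1/r) *
        ∫⁻ t in Set.Ioi (0:ℝ), μ {a | t ≤ |f a|} * ENNReal.ofReal (t ^ (p-1)) := by
    rw [← lintegral_const_mul' _ _ ENNReal.ofReal_ne_top]
    refine lintegral_mono_ae ?_
    filter_upwards [self_mem_ae_restrict (measurableSet_Ioi : MeasurableSet (Set.Ioi (0:ℝ)))]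
      with t ht
    have h1 : {a | t < Gr a} ⊆ {x | ENNReal.ofReal t < G x} := by
      intro x hx
      simp only [Set.mem_setOf_eq, hGr] at hx ⊢
      by_cases hfin : G x = ∞
      · rw [hfin]; exact ENNReal.ofReal_lt_top
      · rw [← ENNReal.ofReal_toReal hfin]
        exact (ENNReal.ofReal_lt_ofReal_iff (lt_trans ht hx)).2 hx
    calc μ {a | t < Gr a} * ENNReal.ofReal (t ^ (p-1))
        ≤ (ENNReal.ofReal (1/r) * μ {x | t ≤ |f x|}) * ENNReal.ofReal (t ^ (p-1)) :=
          mul_le_mul_left (le_trans (measure_mono h1) (hdist t ht)) _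
      _ = ENNReal.ofReal (1/r) * (μ {x | t ≤ |f x|} * ENNReal.ofReal (t ^ (p-1))) :=
          mul_assoc _ _ _
  have hf_abs : ∫⁻ x, (‖f x‖₊ : ℝ≥0∞) ^ p ∂μ = ∫⁻ x, ENNReal.ofReal (|f x| ^ p) ∂μ := by
    refine lintegral_congr fun x => ?_
    rw [← enorm_eq_nnnorm, ← ofReal_norm, Real.norm_eq_abs,
      ← ENNReal.ofReal_rpow_of_nonneg (abs_nonneg _) hp.le]
  have main : ∫⁻ x, (‖percentileMax μ ℱ r f x‖₊ : ℝ≥0∞) ^ p ∂μ ≤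
      ENNReal.ofReal (1/r) * ∫⁻ x, (‖f x‖₊ : ℝ≥0∞) ^ p ∂μ := by
    rw [hf_abs, layF]
    calc ∫⁻ x, (‖percentileMax μ ℱ r f x‖₊ : ℝ≥0∞) ^ p ∂μ
        ≤ ∫⁻ x, ENNReal.ofReal (Gr x ^ p) ∂μ := key1
      _ = ENNReal.ofReal p *
          ∫⁻ t in Set.Ioi (0:ℝ), μ {a | t < Gr a} * ENNReal.ofReal (t ^ (p-1)) := layG
      _ ≤ ENNReal.ofReal p * (ENNReal.ofReal (1/r) *
          ∫⁻ t in Set.Ioi (0:ℝ), μ {a | t ≤ |f a|} * ENNReal.ofReal (t ^ (p-1))) :=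
          mul_le_mul_right hcomp _
      _ = ENNReal.ofReal (1/r) * (ENNReal.ofReal p *
          ∫⁻ t in Set.Ioi (0:ℝ), μ {a | t ≤ |f a|} * ENNReal.ofReal (t ^ (p-1))) := by
          rw [← mul_assoc, mul_comm (ENNReal.ofReal p) (ENNReal.ofReal (1/r)), mul_assoc]
  have final := ENNReal.rpow_le_rpow main (le_of_lt (by positivity : (0:ℝ) < 1/p))
  rw [ENNReal.mul_rpow_of_nonneg _ _ (le_of_lt (by positivity : (0:ℝ) < 1/p))] at final
  refine le_trans final ?_
  have hpow : (ENNReal.ofReal (1/r)) ^ (1/p) = ENNReal.ofReal (r ^ (-(1/p))) := by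
    rw [ENNReal.ofReal_rpow_of_pos (by positivity)]
    congr 1
    rw [one_div r, Real.rpow_neg hr0.le, ← Real.inv_rpow hr0.le]
  rw [hpow]
end

section
/- Let (Ω, F, μ) be a probability space with a filtration {F_k}_{k≥0}, and let {ν_k}_{k≥0} be an increasing sparse sequence of stopping times. Define S_m := ⋃_{k≥0} {ν_k = m} for each m ≥ 0. Then the adapted sequence {S_m}_{m≥0} is 1/2-sparse. -/
open MeasureTheory
open scoped ENNReal

/-- `ν` is a stopping time with values in `ℕ ∪ {∞}` with respect to the filtration `ℱ`. -/
def IsStoppingTimeE {Ω : Type*} {m0 : MeasurableSpace Ω} (ℱ : Filtration ℕ m0)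
    (ν : Ω → ℕ∞) : Prop :=
  ∀ n : ℕ, MeasurableSet[ℱ n] {x | ν x ≤ (n : ℕ∞)}

/-- `A` belongs to the σ-algebra `F_ν` of the stopping time `ν`. -/
def MemStoppedSigma {Ω : Type*} {m0 : MeasurableSpace Ω} (ℱ : Filtration ℕ m0)
    (ν : Ω → ℕ∞) (A : Set Ω) : Prop :=
  ∀ n : ℕ, MeasurableSet[ℱ n] (A ∩ {x | ν x ≤ (n : ℕ∞)})

/-- `{ν_k}` is an increasing sparse sequence of stopping times: each `ν k` is a stopping
time, the sequence is increasing, and for every `k` and every `A ⊆ {ν_k < ∞}` with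
`A ∈ F_{ν_k}` one has `μ(A ∩ {ν_{k+1} < ∞}) ≤ μ(A)/2`. -/
def IsSparseStoppingSeq {Ω : Type*} {m0 : MeasurableSpace Ω} (μ : Measure Ω)
    (ℱ : Filtration ℕ m0) (ν : ℕ → Ω → ℕ∞) : Prop :=
  (∀ k, IsStoppingTimeE ℱ (ν k)) ∧
  (∀ k x, ν k x ≤ ν (k + 1) x) ∧
  (∀ k (A : Set Ω), A ⊆ {x | ν k x ≠ ⊤} → MemStoppedSigma ℱ (ν k) A →
    μ (A ∩ {x | ν (k + 1) x ≠ ⊤}) ≤ μ A / 2)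

/-- An adapted sequence of sets `{S_k}` is `η`-sparse: each `S_k` is `F_k`-measurable and
for every `F_k`-measurable `A ⊆ S_k` one has `μ(A \ ⋃_{m ≥ k+1} S_m) ≥ η μ(A)`. -/
def IsSparseAdaptedSeq {Ω : Type*} {m0 : MeasurableSpace Ω} (μ : Measure Ω)
    (ℱ : Filtration ℕ m0) (η : ℝ) (S : ℕ → Set Ω) : Prop :=
  (∀ k, MeasurableSet[ℱ k] (S k)) ∧
  (∀ k (A : Set Ω), A ⊆ S k → MeasurableSet[ℱ k] A →
    ENNReal.ofReal η * μ A ≤ μ (A \ ⋃ m, ⋃ (_ : k + 1 ≤ m), S m))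

theorem stmt2 {Ω : Type*} {m0 : MeasurableSpace Ω} (μ : Measure Ω) [IsProbabilityMeasure μ]
    (ℱ : Filtration ℕ m0) (ν : ℕ → Ω → ℕ∞)
    (hν : IsSparseStoppingSeq μ ℱ ν) :
    IsSparseAdaptedSeq μ ℱ (1 / 2) (fun m => ⋃ k, {x | ν k x = (m : ℕ∞)}) := by
  classical
  obtain ⟨hst, hmono, hsparse⟩ := hν
  have hmono' : ∀ x, Monotone fun k => ν k x := fun x =>
    monotone_nat_of_le_succ fun k => hmono k x
  have hEq : ∀ k m : ℕ, MeasurableSet[ℱ m] {x | ν k x = (m : ℕ∞)} := by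
    intro k m
    cases m with
    | zero =>
      have h0 : {x | ν k x = ((0:ℕ) : ℕ∞)} = {x | ν k x ≤ ((0:ℕ):ℕ∞)} := by
        ext x; simp [le_zero_iff]
      rw [h0]; exact hst k 0
    | succ n =>
      have h0 : {x | ν k x = ((n+1:ℕ) : ℕ∞)} =
          {x | ν k x ≤ ((n+1:ℕ):ℕ∞)} \ {x | ν k x ≤ (n:ℕ∞)} := by
        ext x
        simp only [Set.mem_setOf_eq, Set.mem_diff]
        constructor
        · intro h
          refine ⟨le_of_eq h, ?_⟩
          rw [h]
          exact fun hle => Nat.not_succ_le_self n (Nat.cast_le.mp hle)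
        · rintro ⟨h1, h2⟩
          push_cast at h1 ⊢
          exact le_antisymm h1 (Order.add_one_le_of_lt (not_le.mp h2))
      rw [h0]
      exact (hst k (n+1)).diff (ℱ.mono (Nat.le_succ n) _ (hst k n))
  constructor
  · intro m
    exact MeasurableSet.iUnion fun k => hEq k m
  · intro m A hAsub hAmeas
    set U : Set Ω := ⋃ n, ⋃ (_ : m + 1 ≤ n), ⋃ k, {x | ν k x = (n : ℕ∞)} with hUdef
    have hUmeas : MeasurableSet U :=
      MeasurableSet.iUnion fun n => MeasurableSet.iUnion fun _ =>
        ℱ.le n _ (MeasurableSet.iUnion fun k => hEq k n)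
    set C : ℕ → Set Ω := fun k =>
      (A ∩ {x | ν k x = (m:ℕ∞)}) ∩ {x | ν (k+1) x ≤ (m:ℕ∞)}ᶜ with hCdef
    have hCmeasF : ∀ k, MeasurableSet[ℱ m] (C k) := fun k =>
      (hAmeas.inter (hEq k m)).inter (hst (k+1) m).compl
    have hCmeas : ∀ k, MeasurableSet (C k) := fun k => ℱ.le m _ (hCmeasF k)
    have hCd : ∀ i j, i < j → Disjoint (C i) (C j) := by
      intro i j h
      refine Set.disjoint_left.mpr ?_
      rintro x ⟨⟨-, hxi⟩, hxgt⟩ ⟨⟨-, hxj⟩, -⟩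
      exact hxgt (le_of_le_of_eq (hmono' x (by omega : i + 1 ≤ j)) hxj)
    have hCdisj : Pairwise (Function.onFun Disjoint C) := by
      intro i j hij
      rcases hij.lt_or_gt with h | h
      · exact hCd i j h
      · exact (hCd j i h).symm
    have hCss : ∀ k, C k ⊆ {x | ν k x ≠ ⊤} := by
      rintro k x ⟨⟨-, hx⟩, -⟩
      simp only [Set.mem_setOf_eq] at hx ⊢
      rw [hx]; simp
    have hCstop : ∀ k, MemStoppedSigma ℱ (ν k) (C k) := by
      intro k n
      by_cases h : m ≤ n
      · have he : C k ∩ {x | ν k x ≤ (n:ℕ∞)} = C k := by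
          apply Set.inter_eq_self_of_subset_left
          rintro x ⟨⟨-, hx⟩, -⟩
          simp only [Set.mem_setOf_eq] at hx ⊢
          rw [hx]; exact_mod_cast h
        rw [he]; exact ℱ.mono h _ (hCmeasF k)
      · have he : C k ∩ {x | ν k x ≤ (n:ℕ∞)} = ∅ := by
          ext x
          simp only [Set.mem_inter_iff, Set.mem_empty_iff_false, iff_false, not_and]
          rintro ⟨⟨-, hx⟩, -⟩ hxn
          simp only [Set.mem_setOf_eq] at hx hxn
          rw [hx] at hxn
          exact h (Nat.cast_le.mp hxn)
        rw [he]; exact @MeasurableSet.empty _ (ℱ n)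
    have hkey : ∀ k, μ (C k ∩ {x | ν (k+1) x ≠ ⊤}) ≤ μ (C k) / 2 :=
      fun k => hsparse k (C k) (hCss k) (hCstop k)
    have hcover : A ∩ U ⊆ ⋃ k, (C k ∩ {x | ν (k+1) x ≠ ⊤}) := by
      rintro x ⟨hxA, hxU⟩
      simp only [hUdef, Set.mem_iUnion] at hxU
      obtain ⟨n, hn, j, hj⟩ := hxU
      obtain ⟨i, hi⟩ := Set.mem_iUnion.mp (hAsub hxA)
      simp only [Set.mem_setOf_eq] at hi hj
      have hij : i < j := by
        by_contra hc
        have hle := hmono' x (not_lt.mp hc)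
        simp only at hle
        rw [hi, hj] at hle
        exact absurd (Nat.cast_le.mp hle) (by omega)
      obtain ⟨k, hkj', hkP, hnext⟩ :
          ∃ k, k < j ∧ ν k x = (m:ℕ∞) ∧ ¬ ν (k+1) x = (m:ℕ∞) := by
        have hkj : Nat.findGreatest (fun r => ν r x = (m:ℕ∞)) j ≤ j :=
          Nat.findGreatest_le j
        have hkP : ν (Nat.findGreatest (fun r => ν r x = (m:ℕ∞)) j) x = (m:ℕ∞) :=
          Nat.findGreatest_spec (P := fun r => ν r x = (m:ℕ∞)) (le_of_lt hij) hi
        have hkj' : Nat.findGreatest (fun r => ν r x = (m:ℕ∞)) j < j := by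
          rcases lt_or_eq_of_le hkj with h | h
          · exact h
          · exfalso
            rw [h, hj] at hkP
            have := Nat.cast_inj.mp hkP
            omega
        exact ⟨Nat.findGreatest (fun r => ν r x = (m:ℕ∞)) j, hkj', hkP,
          Nat.findGreatest_is_greatest (P := fun r => ν r x = (m:ℕ∞)) (k := Nat.findGreatest (fun r => ν r x = (m:ℕ∞)) j + 1) (n := j) (by omega) (by omega)⟩
      have hne : ¬ ν (k+1) x ≤ (m:ℕ∞) := fun hle =>
        hnext (le_antisymm hle (hkP ▸ hmono k x))
      have hfin : ν (k+1) x ≠ ⊤ := by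
        have hle : ν (k+1) x ≤ ν j x := hmono' x (by omega)
        rw [hj] at hle
        exact ne_top_of_le_ne_top (by simp) hle
      exact Set.mem_iUnion.mpr ⟨k, ⟨⟨hxA, hkP⟩, hne⟩, hfin⟩
    have h1 : μ (A ∩ U) ≤ ∑' k, μ (C k ∩ {x | ν (k+1) x ≠ ⊤}) :=
      le_trans (measure_mono hcover) (measure_iUnion_le _)
    have h2 : ∑' k, μ (C k ∩ {x | ν (k+1) x ≠ ⊤}) ≤ ∑' k, μ (C k) / 2 :=
      ENNReal.tsum_le_tsum hkey
    have h3 : ∑' k, μ (C k) / 2 = μ (⋃ k, C k) / 2 := by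
      rw [measure_iUnion hCdisj hCmeas]
      simp_rw [div_eq_mul_inv, ENNReal.tsum_mul_right]
    have h4 : μ (⋃ k, C k) / 2 ≤ μ A / 2 :=
      ENNReal.div_le_div_right
        (measure_mono (Set.iUnion_subset fun k x hx => hx.1.1)) 2
    have hAU : μ (A ∩ U) ≤ μ A / 2 := h1.trans (h2.trans (h3 ▸ h4))
    have hsplit : μ (A \ U) + μ (A ∩ U) = μ A := measure_diff_add_inter A hUmeas
    have hle : μ A ≤ μ (A \ U) + μ A / 2 := by
      calc μ A = μ (A \ U) + μ (A ∩ U) := hsplit.symm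
        _ ≤ μ (A \ U) + μ A / 2 := add_le_add le_rfl hAU
    have hhalf : μ A / 2 ≠ ⊤ := ne_top_of_le_ne_top (measure_ne_top μ A) ENNReal.half_le_self
    have hfinal : μ A / 2 ≤ μ (A \ U) := by
      nth_rewrite 1 [← ENNReal.add_halves (μ A)] at hle
      exact (ENNReal.add_le_add_iff_right hhalf).mp hle
    calc ENNReal.ofReal (1/2) * μ A = μ A / 2 := by
          rw [ENNReal.ofReal_div_of_pos (by norm_num), ENNReal.ofReal_one,
            ENNReal.ofReal_ofNat, one_div, div_eq_mul_inv, mul_comm]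
      _ ≤ μ (A \ U) := hfinal
end

section
/- Let (Ω, F, μ) be a probability space with a filtration {F_k}_{k≥0} of sub-σ-algebras whose union generates F, and fix r ∈ (0, 1/2]. There is a constant C depending only on r such that for every f ∈ L^∞(Ω) there exists a 1/2-sparse adapted sequence S = {S_k}_{k≥0} with ‖M f‖_{L^1(Ω)} ≤ C ‖M_S f‖_{L^1(Ω)}, where M f := sup_{k≥0} |E_k f| and M_S f := sup_{k≥0} 1_{S_k} |E_k f|. In particular ‖M f‖_{L^1(Ω)} ≤ C ‖A_S f‖_{L^1(Ω)}, where A_S f := Σ_{k≥0} 1_{S_k} |E_k f|. -/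
open MeasureTheory
open scoped ENNReal

namespace SparseAux

variable {Ω : Type*}

def Cset (g : ℕ → Ω → ℝ) (lv : ℕ → ℝ) (j k : ℕ) : Set Ω :=
  {x | lv j < |g k x|} ∩ ⋂ m, ⋂ (_ : m < k), {x | |g m x| ≤ lv j}

def Ctop (g : ℕ → Ω → ℝ) (lv : ℕ → ℝ) (j k : ℕ) : Set Ω :=
  Cset g lv j k \ ⋃ j', ⋃ (_ : j' < j), Cset g lv j' k

noncomputable def SSet {m0 : MeasurableSpace Ω} (μ : Measure Ω) (ℱ : Filtration ℕ m0)
    (g : ℕ → Ω → ℝ) (lv : ℕ → ℝ) : ℕ → ℕ → Set Ω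
  | j, k =>
    Ctop g lv j k ∩
      {x | (μ[Set.indicator (⋃ m, ⋃ (_ : k < m), ⋃ j', ⋃ (_ : j' < j), SSet μ ℱ g lv j' m)
            (fun _ => (1 : ℝ)) | ℱ k]) x ≤ 1 / 2}
  termination_by j _ => j

variable {m0 : MeasurableSpace Ω} (μ : Measure Ω) (ℱ : Filtration ℕ m0)
  (g : ℕ → Ω → ℝ) (lv : ℕ → ℝ)

def Fset (j k : ℕ) : Set Ω :=
  ⋃ m, ⋃ (_ : k < m), ⋃ j', ⋃ (_ : j' < j), SSet μ ℱ g lv j' m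

theorem SSet_eq (j k : ℕ) :
    SSet μ ℱ g lv j k = Ctop g lv j k ∩
      {x | (μ[Set.indicator (Fset μ ℱ g lv j k) (fun _ => (1 : ℝ)) | ℱ k]) x ≤ 1 / 2} := by
  rw [SSet, Fset]

section Helpers

variable {m : MeasurableSpace Ω} {h : Ω → ℝ}

theorem ms_lt_abs (hm : StronglyMeasurable[m] h) (t : ℝ) :
    MeasurableSet[m] {x | t < |h x|} :=
  measurableSet_lt measurable_const hm.measurable.abs

theorem ms_abs_le (hm : StronglyMeasurable[m] h) (t : ℝ) :
    MeasurableSet[m] {x | |h x| ≤ t} :=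
  measurableSet_le hm.measurable.abs measurable_const

theorem ms_le_const (hm : StronglyMeasurable[m] h) (t : ℝ) :
    MeasurableSet[m] {x | h x ≤ t} :=
  measurableSet_le hm.measurable measurable_const

end Helpers

section Lemmas

variable {g lv}

theorem measurableSet_Cset (hgm : ∀ k, StronglyMeasurable[ℱ k] (g k)) {j k K : ℕ} (hkK : k ≤ K) :
    MeasurableSet[ℱ K] (Cset g lv j k) := by
  refine MeasurableSet.inter ?_ ?_
  · exact ms_lt_abs ((hgm k).mono (ℱ.mono hkK)) _
  · refine MeasurableSet.iInter fun m => MeasurableSet.iInter fun hm => ?_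
    exact ms_abs_le ((hgm m).mono (ℱ.mono (le_of_lt (lt_of_lt_of_le hm hkK)))) _

theorem measurableSet_Ctop (hgm : ∀ k, StronglyMeasurable[ℱ k] (g k)) {j k K : ℕ} (hkK : k ≤ K) :
    MeasurableSet[ℱ K] (Ctop g lv j k) :=
  (measurableSet_Cset ℱ hgm hkK).diff
    (MeasurableSet.iUnion fun _ => MeasurableSet.iUnion fun _ => measurableSet_Cset ℱ hgm hkK)

theorem measurableSet_SSet (hgm : ∀ k, StronglyMeasurable[ℱ k] (g k)) (j k : ℕ) :
    MeasurableSet[ℱ k] (SSet μ ℱ g lv j k) := by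
  rw [SSet_eq]
  refine (measurableSet_Ctop ℱ hgm le_rfl).inter ?_
  exact ms_le_const stronglyMeasurable_condExp _

theorem measurableSet_SSet' (hgm : ∀ k, StronglyMeasurable[ℱ k] (g k)) (j k : ℕ) :
    MeasurableSet (SSet μ ℱ g lv j k) :=
  ℱ.le k _ (measurableSet_SSet μ ℱ hgm j k)

theorem measurableSet_Fset (hgm : ∀ k, StronglyMeasurable[ℱ k] (g k)) (j k : ℕ) : MeasurableSet (Fset μ ℱ g lv j k) :=
  MeasurableSet.iUnion fun m => MeasurableSet.iUnion fun _ =>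
    MeasurableSet.iUnion fun j' => MeasurableSet.iUnion fun _ =>
      measurableSet_SSet' μ ℱ hgm j' m

theorem SSet_subset_Ctop (j k : ℕ) : SSet μ ℱ g lv j k ⊆ Ctop g lv j k := by
  rw [SSet_eq]; exact Set.inter_subset_left

theorem Ctop_subset_Cset (j k : ℕ) : Ctop g lv j k ⊆ Cset g lv j k :=
  Set.diff_subset

theorem Cset_disj_time {j k k' : ℕ} (h : k < k') {x : Ω}
    (h1 : x ∈ Cset g lv j k) (h2 : x ∈ Cset g lv j k') : False := by
  have hlt : lv j < |g k x| := h1.1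
  have hle : |g k x| ≤ lv j := by
    have := h2.2
    simp only [Set.mem_iInter] at this
    exact this k h
  linarith

theorem Ctop_disj_level {j j' k : ℕ} (h : j ≠ j') {x : Ω}
    (h1 : x ∈ Ctop g lv j k) (h2 : x ∈ Ctop g lv j' k) : False := by
  rcases lt_or_gt_of_ne h with hlt | hlt
  · exact h2.2 (Set.mem_iUnion.2 ⟨j, Set.mem_iUnion.2 ⟨hlt, h1.1⟩⟩)
  · exact h1.2 (Set.mem_iUnion.2 ⟨j', Set.mem_iUnion.2 ⟨hlt, h2.1⟩⟩)

theorem Cset_subset_biUnion_Ctop (j k : ℕ) :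
    Cset g lv j k ⊆ ⋃ j', ⋃ (_ : j' ≤ j), Ctop g lv j' k := by
  intro x hx
  classical
  have hex : ∃ i, x ∈ Cset g lv i k := ⟨j, hx⟩
  let i0 := Nat.find hex
  have hi0 : x ∈ Cset g lv i0 k := Nat.find_spec hex
  have hmin : ∀ i < i0, x ∉ Cset g lv i k := fun i hi => Nat.find_min hex hi
  have hi0le : i0 ≤ j := Nat.find_min' hex hx
  refine Set.mem_iUnion.2 ⟨i0, Set.mem_iUnion.2 ⟨hi0le, hi0, fun hmem => ?_⟩⟩
  rcases Set.mem_iUnion.1 hmem with ⟨i, hi⟩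
  rcases Set.mem_iUnion.1 hi with ⟨hilt, hmem'⟩
  exact hmin i hilt hmem'


/-- The geometric levels. -/
noncomputable def lev (c : ℝ) : ℕ → ℝ := fun j => c * (2 : ℝ)⁻¹ ^ j

theorem lev_pos {c : ℝ} (hc : 0 < c) (j : ℕ) : 0 < lev c j :=
  mul_pos hc (pow_pos (by norm_num) j)

theorem lev_anti {c : ℝ} (hc : 0 < c) {j j' : ℕ} (h : j' ≤ j) : lev c j ≤ lev c j' := by
  unfold lev
  have := pow_le_pow_of_le_one (by norm_num : (0:ℝ) ≤ 2⁻¹) (by norm_num) h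
  nlinarith

theorem lev_lt_level {c : ℝ} (hc : 0 < c) {j j' : ℕ} (h : lev c j < lev c j') : j' < j := by
  by_contra hcon
  exact absurd (lev_anti hc (not_lt.1 hcon)) (not_le.2 h)

/-- Key ordering: a later crossing is a crossing of a strictly higher level. -/
theorem level_lt {c : ℝ} (hc : 0 < c) {g : ℕ → Ω → ℝ} {j j' k m : ℕ} (hkm : k < m) {x : Ω}
    (h1 : x ∈ Cset g (lev c) j k) (h2 : x ∈ Cset g (lev c) j' m) : j' < j := by
  have hlt : lev c j < |g k x| := h1.1
  have hle : |g k x| ≤ lev c j' := by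
    have := h2.2
    simp only [Set.mem_iInter] at this
    exact this k hkm
  exact lev_lt_level hc (lt_of_lt_of_le hlt hle)

/-- The sparse sequence. -/
def Sunion (g : ℕ → Ω → ℝ) (lv : ℕ → ℝ) (k : ℕ) : Set Ω := ⋃ j, SSet μ ℱ g lv j k

theorem mem_Fset_of_future {c : ℝ} (hc : 0 < c) {g : ℕ → Ω → ℝ} {j k m : ℕ} (hkm : k < m)
    {x : Ω} (hx : x ∈ Cset g (lev c) j k) (hx2 : x ∈ Sunion μ ℱ g (lev c) m) :
    x ∈ Fset μ ℱ g (lev c) j k := by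
  rcases Set.mem_iUnion.1 hx2 with ⟨j', hj'⟩
  have hj'j : j' < j :=
    level_lt hc hkm hx (Ctop_subset_Cset _ _ (SSet_subset_Ctop μ ℱ j' m hj'))
  exact Set.mem_iUnion.2 ⟨m, Set.mem_iUnion.2 ⟨hkm,
    Set.mem_iUnion.2 ⟨j', Set.mem_iUnion.2 ⟨hj'j, hj'⟩⟩⟩⟩

section Measure

variable [IsProbabilityMeasure μ]

/-- The half lemma: subsets of `SSet j k` meet `Fset j k` with at most half their measure. -/
theorem half_lemma (hgm : ∀ k, StronglyMeasurable[ℱ k] (g k)) {j k : ℕ} {A : Set Ω}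
    (hA : MeasurableSet[ℱ k] A) (hAS : A ⊆ SSet μ ℱ g lv j k) :
    μ (A ∩ Fset μ ℱ g lv j k) ≤ 2⁻¹ * μ A := by
  have hF : MeasurableSet (Fset μ ℱ g lv j k) := measurableSet_Fset μ ℱ hgm j k
  have hind : Integrable ((Fset μ ℱ g lv j k).indicator fun _ => (1 : ℝ)) μ :=
    (integrable_const 1).indicator hF
  have hA0 : MeasurableSet A := ℱ.le k _ hA
  have h1 : ∫ x in A, (μ[(Fset μ ℱ g lv j k).indicator (fun _ => (1:ℝ))|ℱ k]) x ∂μ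
      = ∫ x in A, (Fset μ ℱ g lv j k).indicator (fun _ => (1:ℝ)) x ∂μ :=
    setIntegral_condExp (ℱ.le k) hind hA
  have h2 : ∫ x in A, (Fset μ ℱ g lv j k).indicator (fun _ => (1:ℝ)) x ∂μ
      = (μ (A ∩ Fset μ ℱ g lv j k)).toReal := by
    rw [setIntegral_indicator hF, setIntegral_const]
    simp
    rfl
  have h3 : ∫ x in A, (μ[(Fset μ ℱ g lv j k).indicator (fun _ => (1:ℝ))|ℱ k]) x ∂μ
      ≤ ∫ x in A, (fun _ => (1:ℝ)/2) x ∂μ := by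
    refine setIntegral_mono_on integrable_condExp.integrableOn
      (integrableOn_const (measure_ne_top μ A)) hA0 ?_
    intro x hx
    have := (hAS hx)
    rw [SSet_eq] at this
    exact this.2
  have h4 : ∫ x in A, (fun _ => (1:ℝ)/2) x ∂μ = (1/2) * (μ A).toReal := by
    simp [setIntegral_const, smul_eq_mul]; exact mul_comm _ _
  have hle : (μ (A ∩ Fset μ ℱ g lv j k)).toReal ≤ (1/2) * (μ A).toReal := by
    rw [← h2, ← h1]; rw [h4] at h3; exact h3
  have hfin1 : μ (A ∩ Fset μ ℱ g lv j k) ≠ ∞ := measure_ne_top μ _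
  have hfin2 : μ A ≠ ∞ := measure_ne_top μ _
  rw [← ENNReal.ofReal_toReal hfin1, ← ENNReal.ofReal_toReal hfin2]
  calc ENNReal.ofReal (μ (A ∩ Fset μ ℱ g lv j k)).toReal
      ≤ ENNReal.ofReal ((1/2) * (μ A).toReal) := ENNReal.ofReal_le_ofReal hle
    _ = ENNReal.ofReal (1/2) * ENNReal.ofReal (μ A).toReal := by
        rw [ENNReal.ofReal_mul]; norm_num
    _ = 2⁻¹ * ENNReal.ofReal (μ A).toReal := by
        congr 1
        rw [one_div, ENNReal.ofReal_inv_of_pos (by norm_num : (0:ℝ) < 2)]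
        norm_num

theorem ofReal_half : ENNReal.ofReal (1 / 2) = (2 : ℝ≥0∞)⁻¹ := by
  rw [one_div, ENNReal.ofReal_inv_of_pos (by norm_num : (0:ℝ) < 2)]
  norm_num

theorem measurableSet_Sunion (hgm : ∀ k, StronglyMeasurable[ℱ k] (g k)) (k : ℕ) :
    MeasurableSet[ℱ k] (Sunion μ ℱ g lv k) :=
  MeasurableSet.iUnion fun j => measurableSet_SSet μ ℱ hgm j k

theorem measurableSet_Sunion' (hgm : ∀ k, StronglyMeasurable[ℱ k] (g k)) (k : ℕ) :
    MeasurableSet (Sunion μ ℱ g lv k) :=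
  ℱ.le k _ (measurableSet_Sunion μ ℱ hgm k)

variable {c : ℝ}

theorem escape (hc : 0 < c) (hgm : ∀ k, StronglyMeasurable[ℱ k] (g k)) {j k : ℕ} {A : Set Ω}
    (hA : MeasurableSet[ℱ k] A) (hAS : A ⊆ SSet μ ℱ g (lev c) j k) :
    2⁻¹ * μ A ≤ μ (A \ ⋃ m, ⋃ (_ : k < m), Sunion μ ℱ g (lev c) m) := by
  set U := ⋃ m, ⋃ (_ : k < m), Sunion μ ℱ g (lev c) m with hU
  have hUmeas : MeasurableSet U :=
    MeasurableSet.iUnion fun m => MeasurableSet.iUnion fun _ => measurableSet_Sunion' μ ℱ hgm m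
  have hsub : A ∩ U ⊆ A ∩ Fset μ ℱ g (lev c) j k := by
    rintro x ⟨hxA, hxU⟩
    refine ⟨hxA, ?_⟩
    rcases Set.mem_iUnion.1 hxU with ⟨m, hm⟩
    rcases Set.mem_iUnion.1 hm with ⟨hkm, hmem⟩
    exact mem_Fset_of_future μ ℱ hc hkm
      (Ctop_subset_Cset _ _ (SSet_subset_Ctop μ ℱ j k (hAS hxA))) hmem
  have hhalf : μ (A ∩ U) ≤ 2⁻¹ * μ A :=
    le_trans (measure_mono hsub) (half_lemma μ ℱ hgm hA hAS)
  have hsum : μ (A ∩ U) + μ (A \ U) = μ A := measure_inter_add_diff A hUmeas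
  have h2 : 2⁻¹ * μ A + 2⁻¹ * μ A ≤ 2⁻¹ * μ A + μ (A \ U) := by
    have heq : (2:ℝ≥0∞)⁻¹ * μ A + 2⁻¹ * μ A = μ A := by
      rw [← add_mul, ENNReal.inv_two_add_inv_two, one_mul]
    rw [heq]
    calc μ A = μ (A ∩ U) + μ (A \ U) := hsum.symm
      _ ≤ 2⁻¹ * μ A + μ (A \ U) := add_le_add_left hhalf _
  exact (ENNReal.add_le_add_iff_left
    (ne_of_lt (lt_of_le_of_lt (le_of_eq rfl) (lt_of_le_of_lt
      (mul_le_of_le_one_left zero_le (by norm_num)) (measure_lt_top μ A))))).1 h2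

theorem sparse_bound (hc : 0 < c) (hgm : ∀ k, StronglyMeasurable[ℱ k] (g k)) (k : ℕ)
    (A : Set Ω) (hAS : A ⊆ Sunion μ ℱ g (lev c) k) (hA : MeasurableSet[ℱ k] A) :
    ENNReal.ofReal (1 / 2) * μ A ≤ μ (A \ ⋃ m, ⋃ (_ : k + 1 ≤ m), Sunion μ ℱ g (lev c) m) := by
  rw [ofReal_half]
  set U := ⋃ m, ⋃ (_ : k < m), Sunion μ ℱ g (lev c) m with hUdef
  show 2⁻¹ * μ A ≤ μ (A \ U)
  have hUmeas : MeasurableSet U :=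
    MeasurableSet.iUnion fun m => MeasurableSet.iUnion fun _ => measurableSet_Sunion' μ ℱ hgm m
  have hAjmeas : ∀ j, MeasurableSet[ℱ k] (A ∩ SSet μ ℱ g (lev c) j k) :=
    fun j => hA.inter (measurableSet_SSet μ ℱ hgm j k)
  have hAeq : A \ U = ⋃ j, (A ∩ SSet μ ℱ g (lev c) j k) \ U := by
    ext x
    simp only [Set.mem_diff, Set.mem_iUnion, Set.mem_inter_iff]
    constructor
    · rintro ⟨hxA, hxU⟩
      rcases Set.mem_iUnion.1 (hAS hxA) with ⟨j, hj⟩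
      exact ⟨j, ⟨hxA, hj⟩, hxU⟩
    · rintro ⟨j, ⟨hxA, _⟩, hxU⟩
      exact ⟨hxA, hxU⟩
  have hdisj : Pairwise (Function.onFun Disjoint
      fun j => (A ∩ SSet μ ℱ g (lev c) j k) \ U) := by
    intro j j' hjj'
    refine Set.disjoint_left.2 fun x hx hx' => ?_
    exact Ctop_disj_level hjj' (SSet_subset_Ctop μ ℱ j k hx.1.2)
      (SSet_subset_Ctop μ ℱ j' k hx'.1.2)
  have hmeas : ∀ j, MeasurableSet ((A ∩ SSet μ ℱ g (lev c) j k) \ U) :=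
    fun j => (ℱ.le k _ (hAjmeas j)).diff hUmeas
  calc 2⁻¹ * μ A ≤ 2⁻¹ * ∑' j, μ (A ∩ SSet μ ℱ g (lev c) j k) := by
        refine mul_le_mul_right ?_ _
        have : A = ⋃ j, A ∩ SSet μ ℱ g (lev c) j k := by
          rw [← Set.inter_iUnion]
          exact (Set.inter_eq_self_of_subset_left hAS).symm
        calc μ A = μ (⋃ j, A ∩ SSet μ ℱ g (lev c) j k) := by rw [← this]
          _ ≤ ∑' j, μ (A ∩ SSet μ ℱ g (lev c) j k) := measure_iUnion_le _
    _ = ∑' j, 2⁻¹ * μ (A ∩ SSet μ ℱ g (lev c) j k) := by rw [ENNReal.tsum_mul_left]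
    _ ≤ ∑' j, μ ((A ∩ SSet μ ℱ g (lev c) j k) \ U) := by
        refine ENNReal.tsum_le_tsum fun j => ?_
        exact escape μ ℱ hc hgm (hAjmeas j) Set.inter_subset_right
    _ = μ (⋃ j, (A ∩ SSet μ ℱ g (lev c) j k) \ U) := (measure_iUnion hdisj hmeas).symm
    _ = μ (A \ U) := by rw [← hAeq]

/-- The removed part. -/
def Rset (g : ℕ → Ω → ℝ) (c : ℝ) (j k : ℕ) : Set Ω :=
  Ctop g (lev c) j k \ SSet μ ℱ g (lev c) j k

noncomputable def ell (c : ℝ) (j : ℕ) : ℝ≥0∞ := ENNReal.ofReal (lev c j)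

noncomputable def aJ (μ : Measure Ω) (g : ℕ → Ω → ℝ) (c : ℝ) (j : ℕ) : ℝ≥0∞ :=
  ∑' k, μ (Ctop g (lev c) j k)
noncomputable def sJ (g : ℕ → Ω → ℝ) (c : ℝ) (j : ℕ) : ℝ≥0∞ :=
  ∑' k, μ (SSet μ ℱ g (lev c) j k)
noncomputable def rJ (g : ℕ → Ω → ℝ) (c : ℝ) (j : ℕ) : ℝ≥0∞ :=
  ∑' k, μ (Rset μ ℱ g c j k)

theorem ell_eq (c : ℝ) (hc : 0 ≤ c) (j : ℕ) :
    ell c j = ENNReal.ofReal c * (2 : ℝ≥0∞)⁻¹ ^ j := by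
  unfold ell lev
  rw [ENNReal.ofReal_mul hc, ENNReal.ofReal_pow (by norm_num : (0:ℝ) ≤ 2⁻¹)]
  congr 2
  rw [ENNReal.ofReal_inv_of_pos (by norm_num : (0:ℝ) < 2)]
  norm_num

theorem ell_succ (c : ℝ) (hc : 0 ≤ c) (j : ℕ) : ell c (j + 1) = ell c j * 2⁻¹ := by
  rw [ell_eq c hc, ell_eq c hc, pow_succ, mul_assoc]

theorem geom_tail {c : ℝ} (hc : 0 ≤ c) (n : ℕ) :
    ∑' j, (if n ≤ j then ell c j else 0) = 2 * ell c n := by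
  have hinj : Function.Injective fun x : ℕ => n + x := fun a b h => Nat.add_left_cancel h
  have hsupp : Function.support (fun j => if n ≤ j then ell c j else 0) ⊆
      Set.range (fun x : ℕ => n + x) := by
    intro j hj
    by_cases h : n ≤ j
    · exact ⟨j - n, show n + (j - n) = j by omega⟩
    · simp [h] at hj
  rw [← Function.Injective.tsum_eq hinj hsupp]
  have hterm : ∀ x : ℕ, (if n ≤ n + x then ell c (n + x) else 0) = ell c n * 2⁻¹ ^ x := by
    intro x
    rw [if_pos (by omega), ell_eq c hc, ell_eq c hc, pow_add, mul_assoc]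
  calc (∑' x : ℕ, if n ≤ n + x then ell c (n + x) else 0)
      = ∑' x : ℕ, ell c n * 2⁻¹ ^ x := tsum_congr hterm
    _ = ell c n * ∑' x : ℕ, (2:ℝ≥0∞)⁻¹ ^ x := ENNReal.tsum_mul_left
    _ = 2 * ell c n := by
        rw [ENNReal.tsum_geometric, ENNReal.one_sub_inv_two, inv_inv, mul_comm]

theorem aJ_eq (hgm : ∀ k, StronglyMeasurable[ℱ k] (g k)) (j : ℕ) :
    aJ μ g c j = sJ μ ℱ g c j + rJ μ ℱ g c j := by
  unfold aJ sJ rJ Rset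
  rw [← ENNReal.tsum_add]
  refine tsum_congr fun k => ?_
  have hmeas : MeasurableSet (SSet μ ℱ g (lev c) j k) := measurableSet_SSet' μ ℱ hgm j k
  have := measure_inter_add_diff (μ := μ) (Ctop g (lev c) j k) hmeas
  rw [Set.inter_eq_self_of_subset_right (SSet_subset_Ctop μ ℱ j k)] at this
  exact this.symm

def Zset (g : ℕ → Ω → ℝ) (c : ℝ) (j : ℕ) : Set Ω :=
  ⋃ j', ⋃ (_ : j' < j), ⋃ m, SSet μ ℱ g (lev c) j' m

theorem sJ_eq_measure (hgm : ∀ k, StronglyMeasurable[ℱ k] (g k)) (j : ℕ) :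
    μ (⋃ m, SSet μ ℱ g (lev c) j m) = sJ μ ℱ g c j := by
  refine measure_iUnion ?_ fun m => measurableSet_SSet' μ ℱ hgm j m
  intro m m' hmm'
  refine Set.disjoint_left.2 fun x hx hx' => ?_
  rcases lt_or_gt_of_ne hmm' with h | h
  · exact Cset_disj_time h (Ctop_subset_Cset _ _ (SSet_subset_Ctop μ ℱ j m hx))
      (Ctop_subset_Cset _ _ (SSet_subset_Ctop μ ℱ j m' hx'))
  · exact Cset_disj_time h (Ctop_subset_Cset _ _ (SSet_subset_Ctop μ ℱ j m' hx'))
      (Ctop_subset_Cset _ _ (SSet_subset_Ctop μ ℱ j m hx))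

theorem measure_Rset_le (hgm : ∀ k, StronglyMeasurable[ℱ k] (g k)) (j k : ℕ) :
    μ (Rset μ ℱ g c j k) ≤ 2 * μ (Rset μ ℱ g c j k ∩ Fset μ ℱ g (lev c) j k) := by
  set R := Rset μ ℱ g c j k with hRdef
  have hRm : MeasurableSet[ℱ k] R :=
    (measurableSet_Ctop ℱ hgm le_rfl).diff (measurableSet_SSet μ ℱ hgm j k)
  have hRm0 : MeasurableSet R := ℱ.le k _ hRm
  have hF : MeasurableSet (Fset μ ℱ g (lev c) j k) := measurableSet_Fset μ ℱ hgm j k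
  have hind : Integrable ((Fset μ ℱ g (lev c) j k).indicator fun _ => (1 : ℝ)) μ :=
    (integrable_const 1).indicator hF
  have hcond : ∀ x ∈ R, (1:ℝ)/2 ≤ (μ[(Fset μ ℱ g (lev c) j k).indicator
      (fun _ => (1:ℝ))|ℱ k]) x := by
    intro x hx
    by_contra hcon
    exact hx.2 (by rw [SSet_eq]; exact ⟨hx.1, le_of_lt (not_le.1 hcon)⟩)
  have h3 : ∫ x in R, (fun _ => (1:ℝ)/2) x ∂μ
      ≤ ∫ x in R, (μ[(Fset μ ℱ g (lev c) j k).indicator (fun _ => (1:ℝ))|ℱ k]) x ∂μ :=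
    setIntegral_mono_on (integrableOn_const (measure_ne_top μ R))
      integrable_condExp.integrableOn hRm0 hcond
  have h1 : ∫ x in R, (μ[(Fset μ ℱ g (lev c) j k).indicator (fun _ => (1:ℝ))|ℱ k]) x ∂μ
      = (μ (R ∩ Fset μ ℱ g (lev c) j k)).toReal := by
    rw [setIntegral_condExp (ℱ.le k) hind hRm, setIntegral_indicator hF, setIntegral_const]
    simp
    rfl
  have h4 : ∫ x in R, (fun _ => (1:ℝ)/2) x ∂μ = (1/2) * (μ R).toReal := by
    simp [setIntegral_const, smul_eq_mul]; exact mul_comm _ _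
  have hle : (μ R).toReal ≤ 2 * (μ (R ∩ Fset μ ℱ g (lev c) j k)).toReal := by
    rw [h4, h1] at h3; linarith
  have hfin1 : μ R ≠ ∞ := measure_ne_top μ _
  have hfin2 : μ (R ∩ Fset μ ℱ g (lev c) j k) ≠ ∞ := measure_ne_top μ _
  rw [← ENNReal.ofReal_toReal hfin1, ← ENNReal.ofReal_toReal hfin2]
  calc ENNReal.ofReal (μ R).toReal
      ≤ ENNReal.ofReal (2 * (μ (R ∩ Fset μ ℱ g (lev c) j k)).toReal) :=
        ENNReal.ofReal_le_ofReal hle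
    _ = ENNReal.ofReal 2 * ENNReal.ofReal (μ (R ∩ Fset μ ℱ g (lev c) j k)).toReal := by
        rw [ENNReal.ofReal_mul]; norm_num
    _ = 2 * ENNReal.ofReal (μ (R ∩ Fset μ ℱ g (lev c) j k)).toReal := by norm_num

theorem Fset_subset_Zset (j k : ℕ) :
    Fset μ ℱ g (lev c) j k ⊆ Zset μ ℱ g c j := by
  intro x hx
  rcases Set.mem_iUnion.1 hx with ⟨m, hm⟩
  rcases Set.mem_iUnion.1 hm with ⟨hkm, h1⟩
  rcases Set.mem_iUnion.1 h1 with ⟨j', h2⟩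
  rcases Set.mem_iUnion.1 h2 with ⟨hj', h3⟩
  exact Set.mem_iUnion.2 ⟨j', Set.mem_iUnion.2 ⟨hj', Set.mem_iUnion.2 ⟨m, h3⟩⟩⟩

theorem rJ_le (hgm : ∀ k, StronglyMeasurable[ℱ k] (g k)) (j : ℕ) :
    rJ μ ℱ g c j ≤ 2 * ∑' j', (if j' < j then sJ μ ℱ g c j' else 0) := by
  have hstep1 : rJ μ ℱ g c j ≤ 2 * ∑' k, μ (Rset μ ℱ g c j k ∩ Zset μ ℱ g c j) := by
    rw [← ENNReal.tsum_mul_left]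
    refine ENNReal.tsum_le_tsum fun k => ?_
    refine le_trans (measure_Rset_le μ ℱ hgm j k) (mul_le_mul_right ?_ _)
    exact measure_mono (Set.inter_subset_inter_right _ (Fset_subset_Zset μ ℱ j k))
  have hstep2 : ∑' k, μ (Rset μ ℱ g c j k ∩ Zset μ ℱ g c j) ≤ μ (Zset μ ℱ g c j) := by
    have hdisj : Pairwise (Function.onFun Disjoint
        fun k => Rset μ ℱ g c j k ∩ Zset μ ℱ g c j) := by
      intro k k' hkk'
      refine Set.disjoint_left.2 fun x hx hx' => ?_
      rcases lt_or_gt_of_ne hkk' with h | h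
      · exact Cset_disj_time h (Ctop_subset_Cset _ _ hx.1.1) (Ctop_subset_Cset _ _ hx'.1.1)
      · exact Cset_disj_time h (Ctop_subset_Cset _ _ hx'.1.1) (Ctop_subset_Cset _ _ hx.1.1)
    have hmeas : ∀ k, MeasurableSet (Rset μ ℱ g c j k ∩ Zset μ ℱ g c j) := by
      intro k
      refine MeasurableSet.inter (ℱ.le k _ ((measurableSet_Ctop ℱ hgm le_rfl).diff
        (measurableSet_SSet μ ℱ hgm j k))) ?_
      exact MeasurableSet.iUnion fun j' => MeasurableSet.iUnion fun _ =>
        MeasurableSet.iUnion fun m => measurableSet_SSet' μ ℱ hgm j' m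
    rw [← measure_iUnion hdisj hmeas]
    exact measure_mono (Set.iUnion_subset fun k => Set.inter_subset_right)
  have hstep3 : μ (Zset μ ℱ g c j) ≤ ∑' j', (if j' < j then sJ μ ℱ g c j' else 0) := by
    refine le_trans (measure_iUnion_le _) (ENNReal.tsum_le_tsum fun j' => ?_)
    by_cases h : j' < j
    · simp only [h, Set.iUnion_true, if_true]
      exact le_of_eq (sJ_eq_measure μ ℱ hgm j')
    · simp [h]
  calc rJ μ ℱ g c j ≤ 2 * ∑' k, μ (Rset μ ℱ g c j k ∩ Zset μ ℱ g c j) := hstep1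
    _ ≤ 2 * μ (Zset μ ℱ g c j) := mul_le_mul_right hstep2 _
    _ ≤ 2 * ∑' j', (if j' < j then sJ μ ℱ g c j' else 0) := mul_le_mul_right hstep3 _

theorem main_sum (hc : 0 < c) (hgm : ∀ k, StronglyMeasurable[ℱ k] (g k)) :
    ∑' j, ell c j * aJ μ g c j ≤ 3 * ∑' j, ell c j * sJ μ ℱ g c j := by
  have hsplit : ∑' j, ell c j * aJ μ g c j
      = (∑' j, ell c j * sJ μ ℱ g c j) + ∑' j, ell c j * rJ μ ℱ g c j := by
    rw [← ENNReal.tsum_add]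
    refine tsum_congr fun j => ?_
    rw [aJ_eq μ ℱ hgm j, mul_add]
  have hr : ∑' j, ell c j * rJ μ ℱ g c j ≤ 2 * ∑' j, ell c j * sJ μ ℱ g c j := by
    calc ∑' j, ell c j * rJ μ ℱ g c j
        ≤ ∑' j, ell c j * (2 * ∑' j', (if j' < j then sJ μ ℱ g c j' else 0)) :=
          ENNReal.tsum_le_tsum fun j => mul_le_mul_right (rJ_le μ ℱ hgm j) _
      _ = 2 * ∑' j, ∑' j', (if j' < j then ell c j * sJ μ ℱ g c j' else 0) := by
          rw [← ENNReal.tsum_mul_left]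
          refine tsum_congr fun j => ?_
          rw [← mul_assoc, mul_comm (ell c j) 2, mul_assoc, ← ENNReal.tsum_mul_left]
          congr 1
          refine tsum_congr fun j' => ?_
          rw [mul_ite, mul_zero]
      _ = 2 * ∑' j', ∑' j, (if j' < j then ell c j * sJ μ ℱ g c j' else 0) := by
          rw [ENNReal.tsum_comm]
      _ = 2 * ∑' j', sJ μ ℱ g c j' * ∑' j, (if j' < j then ell c j else 0) := by
          congr 1
          refine tsum_congr fun j' => ?_
          rw [← ENNReal.tsum_mul_left]
          refine tsum_congr fun j => ?_
          rw [mul_ite, mul_zero, mul_comm]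
      _ = 2 * ∑' j', sJ μ ℱ g c j' * (2 * ell c (j' + 1)) := by
          congr 1
          refine tsum_congr fun j' => ?_
          congr 1
          exact geom_tail (le_of_lt hc) (j' + 1)
      _ = 2 * ∑' j', ell c j' * sJ μ ℱ g c j' := by
          congr 1
          refine tsum_congr fun j' => ?_
          rw [ell_succ c (le_of_lt hc)]
          calc sJ μ ℱ g c j' * (2 * (ell c j' * 2⁻¹))
              = (2 * 2⁻¹) * (ell c j' * sJ μ ℱ g c j') := by ring
            _ = ell c j' * sJ μ ℱ g c j' := by
                rw [ENNReal.mul_inv_cancel (by norm_num) (by norm_num), one_mul]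
  calc ∑' j, ell c j * aJ μ g c j
      = (∑' j, ell c j * sJ μ ℱ g c j) + ∑' j, ell c j * rJ μ ℱ g c j := hsplit
    _ ≤ (∑' j, ell c j * sJ μ ℱ g c j) + 2 * ∑' j, ell c j * sJ μ ℱ g c j :=
        add_le_add_right hr _
    _ = 3 * ∑' j, ell c j * sJ μ ℱ g c j := by ring

def Kset (g : ℕ → Ω → ℝ) (c : ℝ) (j k : ℕ) : Set Ω :=
  SSet μ ℱ g (lev c) j k \ ⋃ m, ⋃ (_ : k < m), Sunion μ ℱ g (lev c) m

theorem Kset_half (hc : 0 < c) (hgm : ∀ k, StronglyMeasurable[ℱ k] (g k)) (j k : ℕ) :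
    2⁻¹ * μ (SSet μ ℱ g (lev c) j k) ≤ μ (Kset μ ℱ g c j k) :=
  escape μ ℱ hc hgm (measurableSet_SSet μ ℱ hgm j k) subset_rfl

theorem Kset_disjoint (p q : ℕ × ℕ) (hpq : p ≠ q) :
    Disjoint (Kset μ ℱ g c p.1 p.2) (Kset μ ℱ g c q.1 q.2) := by
  rcases p with ⟨j, k⟩; rcases q with ⟨j', k'⟩
  refine Set.disjoint_left.2 fun x hx hx' => ?_
  rcases Nat.lt_trichotomy k k' with h | h | h
  · exact hx.2 (Set.mem_iUnion.2 ⟨k', Set.mem_iUnion.2 ⟨h,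
      Set.mem_iUnion.2 ⟨j', hx'.1⟩⟩⟩)
  · subst h
    have hjj' : j ≠ j' := by
      intro hcon
      exact hpq (by simp [hcon])
    exact Ctop_disj_level hjj' (SSet_subset_Ctop μ ℱ j k hx.1)
      (SSet_subset_Ctop μ ℱ j' k hx'.1)
  · exact hx'.2 (Set.mem_iUnion.2 ⟨k, Set.mem_iUnion.2 ⟨h,
      Set.mem_iUnion.2 ⟨j, hx.1⟩⟩⟩)

theorem measurableSet_Kset (hgm : ∀ k, StronglyMeasurable[ℱ k] (g k)) (j k : ℕ) :
    MeasurableSet (Kset μ ℱ g c j k) :=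
  (measurableSet_SSet' μ ℱ hgm j k).diff
    (MeasurableSet.iUnion fun m => MeasurableSet.iUnion fun _ =>
      measurableSet_Sunion' μ ℱ hgm m)

set_option maxHeartbeats 1000000 in
/-- Lower bound on the integral of the sparse maximal function. -/
theorem lower_bound (hc : 0 < c) (hgm : ∀ k, StronglyMeasurable[ℱ k] (g k))
    (hbd : ∀ᵐ x ∂μ, ∀ k, |g k x| ≤ c) :
    2⁻¹ * ∑' j, ell c j * sJ μ ℱ g c j ≤
      ∫⁻ x, ENNReal.ofReal
        (⨆ k, Set.indicator (Sunion μ ℱ g (lev c) k) (fun z => |g k z|) x) ∂μ := by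
  classical
  set Ω₀ : Set Ω := {x | ∀ k, |g k x| ≤ c} with hΩ₀def
  have hΩ₀null : μ Ω₀ᶜ = 0 := by
    have hcompl : Ω₀ᶜ = {x | ¬ ∀ k, |g k x| ≤ c} := rfl
    rw [hcompl]
    exact ae_iff.1 hbd
  have hgmeas : ∀ k, Measurable (g k) := fun k => ((hgm k).mono (ℱ.le k)).measurable
  have hΩ₀meas : MeasurableSet Ω₀ := by
    have : Ω₀ = ⋂ k, {x | |g k x| ≤ c} := by ext x; simp [hΩ₀def]
    rw [this]
    exact MeasurableSet.iInter fun k => measurableSet_le (hgmeas k).abs measurable_const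
  have hpoint : ∀ j k, ∀ x ∈ Kset μ ℱ g c j k ∩ Ω₀, ell c j ≤ ENNReal.ofReal
      (⨆ k', Set.indicator (Sunion μ ℱ g (lev c) k') (fun z => |g k' z|) x) := by
    rintro j k x ⟨hxK, hxΩ⟩
    have hxS : x ∈ SSet μ ℱ g (lev c) j k := hxK.1
    have hxC : x ∈ Cset g (lev c) j k := Ctop_subset_Cset _ _ (SSet_subset_Ctop μ ℱ j k hxS)
    have hxU : x ∈ Sunion μ ℱ g (lev c) k := Set.mem_iUnion.2 ⟨j, hxS⟩
    have hval : Set.indicator (Sunion μ ℱ g (lev c) k) (fun z => |g k z|) x = |g k x| :=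
      Set.indicator_of_mem hxU _
    have hbdd : BddAbove (Set.range fun k' =>
        Set.indicator (Sunion μ ℱ g (lev c) k') (fun z => |g k' z|) x) := by
      refine ⟨c, ?_⟩
      rintro y ⟨k', rfl⟩
      dsimp only
      by_cases hmem : x ∈ Sunion μ ℱ g (lev c) k'
      · rw [Set.indicator_of_mem hmem]; exact hxΩ k'
      · rw [Set.indicator_of_notMem hmem]; exact le_of_lt hc
    have hle : lev c j ≤ ⨆ k', Set.indicator (Sunion μ ℱ g (lev c) k')
        (fun z => |g k' z|) x := by
      refine le_trans (le_of_lt hxC.1) ?_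
      rw [← hval]
      exact le_ciSup hbdd k
    exact ENNReal.ofReal_le_ofReal hle
  calc 2⁻¹ * ∑' j, ell c j * sJ μ ℱ g c j
      = ∑' (p : ℕ × ℕ), ell c p.1 * (2⁻¹ * μ (SSet μ ℱ g (lev c) p.1 p.2)) := by
        rw [ENNReal.tsum_prod']
        rw [← ENNReal.tsum_mul_left]
        refine tsum_congr fun j => ?_
        unfold sJ
        rw [← ENNReal.tsum_mul_left, ← ENNReal.tsum_mul_left]
        refine tsum_congr fun k => ?_
        ring
    _ ≤ ∑' (p : ℕ × ℕ), ell c p.1 * μ (Kset μ ℱ g c p.1 p.2 ∩ Ω₀) := by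
        refine ENNReal.tsum_le_tsum fun p => mul_le_mul_right ?_ _
        rw [measure_inter_conull hΩ₀null]
        exact Kset_half μ ℱ hc hgm p.1 p.2
    _ ≤ ∑' (p : ℕ × ℕ), ∫⁻ x in Kset μ ℱ g c p.1 p.2 ∩ Ω₀, ENNReal.ofReal
          (⨆ k, Set.indicator (Sunion μ ℱ g (lev c) k) (fun z => |g k z|) x) ∂μ := by
        refine ENNReal.tsum_le_tsum fun p => ?_
        rw [← setLIntegral_const (Kset μ ℱ g c p.1 p.2 ∩ Ω₀) (ell c p.1)]
        exact setLIntegral_mono' ((measurableSet_Kset μ ℱ hgm p.1 p.2).inter hΩ₀meas)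
          fun x hx => hpoint p.1 p.2 x hx
    _ = ∫⁻ x in ⋃ (p : ℕ × ℕ), (Kset μ ℱ g c p.1 p.2 ∩ Ω₀), ENNReal.ofReal
          (⨆ k, Set.indicator (Sunion μ ℱ g (lev c) k) (fun z => |g k z|) x) ∂μ := by
        have hdisj : Pairwise (Function.onFun Disjoint
            (fun p : ℕ × ℕ => Kset μ ℱ g c p.1 p.2 ∩ Ω₀)) := fun p q hpq =>
          Set.disjoint_of_subset Set.inter_subset_left Set.inter_subset_left
            (Kset_disjoint μ ℱ p q hpq)
        exact (lintegral_iUnion (μ := μ)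
          (s := fun p : ℕ × ℕ => Kset μ ℱ g c p.1 p.2 ∩ Ω₀)
          (fun p => (measurableSet_Kset μ ℱ hgm p.1 p.2).inter hΩ₀meas) hdisj
          (fun x => ENNReal.ofReal
            (⨆ k, Set.indicator (Sunion μ ℱ g (lev c) k) (fun z => |g k z|) x))).symm
    _ ≤ ∫⁻ x, ENNReal.ofReal
          (⨆ k, Set.indicator (Sunion μ ℱ g (lev c) k) (fun z => |g k z|) x) ∂μ :=
        setLIntegral_le_lintegral _ _

theorem lev_zero (c : ℝ) : lev c 0 = c := by simp [lev]

theorem two_mul_ell_succ (hc0 : 0 ≤ c) (i : ℕ) : 2 * ell c (i + 1) = ell c i := by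
  rw [ell_succ c hc0, mul_comm (ell c i) (2:ℝ≥0∞)⁻¹, ← mul_assoc,
    ENNReal.mul_inv_cancel (by norm_num) (by norm_num), one_mul]

/-- Upper bound on the integral of the full maximal function. -/
theorem upper_bound (hc : 0 < c) (hgm : ∀ k, StronglyMeasurable[ℱ k] (g k))
    (hbd : ∀ᵐ x ∂μ, ∀ k, |g k x| ≤ c) :
    ∫⁻ x, ENNReal.ofReal (⨆ k, |g k x|) ∂μ ≤ 4 * ∑' j, ell c j * aJ μ g c j := by
  classical
  have hgmeas : ∀ k, Measurable (g k) := fun k => ((hgm k).mono (ℱ.le k)).measurable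
  set G : Ω → ℝ≥0∞ := fun x => ⨆ k, ENNReal.ofReal |g k x| with hGdef
  have hGmeas : Measurable G :=
    Measurable.iSup fun k => ((hgmeas k).abs).ennreal_ofReal
  set E : ℕ → Set Ω := fun j => {x | ell c j < G x} with hEdef
  have hEmeas : ∀ j, MeasurableSet (E j) := fun j =>
    measurableSet_lt measurable_const hGmeas
  -- pointwise a.e. bound
  have haepoint : ∀ᵐ x ∂μ, ENNReal.ofReal (⨆ k, |g k x|) ≤
      ∑' j, Set.indicator (E (j+1) \ E j) (fun _ => 2 * ell c (j+1)) x := by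
    filter_upwards [hbd] with x hx
    have hub : ∀ k, ENNReal.ofReal |g k x| ≤ ENNReal.ofReal c := fun k =>
      ENNReal.ofReal_le_ofReal (hx k)
    have hGle : G x ≤ ENNReal.ofReal c := iSup_le hub
    have hGne : G x ≠ ∞ := ne_of_lt (lt_of_le_of_lt hGle ENNReal.ofReal_lt_top)
    have step1 : ENNReal.ofReal (⨆ k, |g k x|) ≤ G x := by
      have h1 : ∀ k, |g k x| ≤ (G x).toReal := fun k => by
        have h2 : ENNReal.ofReal |g k x| ≤ G x := le_iSup (fun k => ENNReal.ofReal |g k x|) k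
        calc |g k x| = (ENNReal.ofReal |g k x|).toReal :=
              (ENNReal.toReal_ofReal (abs_nonneg _)).symm
          _ ≤ (G x).toReal := ENNReal.toReal_mono hGne h2
      calc ENNReal.ofReal (⨆ k, |g k x|) ≤ ENNReal.ofReal ((G x).toReal) :=
            ENNReal.ofReal_le_ofReal (ciSup_le h1)
        _ = G x := ENNReal.ofReal_toReal hGne
    refine le_trans step1 ?_
    by_cases hzero : G x = 0
    · rw [hzero]; exact zero_le
    -- there is a level below G x
    have hex : ∃ j, ell c j < G x := by
      have hpos : 0 < G x := pos_iff_ne_zero.2 hzero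
      rcases lt_iSup_iff.1 hpos with ⟨k, hk⟩
      have habs : 0 < |g k x| := ENNReal.ofReal_pos.1 hk
      rcases exists_pow_lt_of_lt_one (div_pos habs hc) (by norm_num : (2:ℝ)⁻¹ < 1) with ⟨n, hn⟩
      refine ⟨n, lt_of_lt_of_le ?_ (le_iSup (fun k => ENNReal.ofReal |g k x|) k)⟩
      rw [show ell c n = ENNReal.ofReal (lev c n) from rfl]
      rw [ENNReal.ofReal_lt_ofReal_iff habs]
      calc lev c n = c * (2:ℝ)⁻¹ ^ n := rfl
        _ < c * (|g k x| / c) := by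
            exact mul_lt_mul_of_pos_left hn hc
        _ = |g k x| := by field_simp
    set j₀ := Nat.find hex with hj₀def
    have hj₀ : ell c j₀ < G x := Nat.find_spec hex
    have hmin : ∀ i, i < j₀ → ¬ ell c i < G x := fun i hi => Nat.find_min hex hi
    have hj₀ne : j₀ ≠ 0 := by
      intro hcon
      rw [hcon] at hj₀
      have : ell c 0 = ENNReal.ofReal c := by rw [show ell c 0 = ENNReal.ofReal (lev c 0) from rfl, lev_zero]
      rw [this] at hj₀
      exact absurd hGle (not_le.2 hj₀)
    rcases Nat.exists_eq_succ_of_ne_zero hj₀ne with ⟨i, hi⟩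
    have hieq : j₀ = i + 1 := hi
    have hxE1 : x ∈ E (i + 1) := by rw [← hieq]; exact hj₀
    have hxE0 : x ∉ E i := fun hmem => hmin i (by omega) hmem
    have hterm : Set.indicator (E (i+1) \ E i) (fun _ => 2 * ell c (i+1)) x
        = 2 * ell c (i+1) := Set.indicator_of_mem (Set.mem_diff x |>.2 ⟨hxE1, hxE0⟩) _
    have hGlei : G x ≤ ell c i := not_lt.1 hxE0
    calc G x ≤ ell c i := hGlei
      _ = 2 * ell c (i+1) := (two_mul_ell_succ (le_of_lt hc) i).symm
      _ = Set.indicator (E (i+1) \ E i) (fun _ => 2 * ell c (i+1)) x := hterm.symm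
      _ ≤ ∑' j, Set.indicator (E (j+1) \ E j) (fun _ => 2 * ell c (j+1)) x :=
          ENNReal.le_tsum i
  -- integrate
  have hint : ∫⁻ x, ENNReal.ofReal (⨆ k, |g k x|) ∂μ
      ≤ ∑' j, (2 * ell c (j+1)) * μ (E (j+1) \ E j) := by
    calc ∫⁻ x, ENNReal.ofReal (⨆ k, |g k x|) ∂μ
        ≤ ∫⁻ x, ∑' j, Set.indicator (E (j+1) \ E j) (fun _ => 2 * ell c (j+1)) x ∂μ :=
          lintegral_mono_ae haepoint
      _ = ∑' j, ∫⁻ x, Set.indicator (E (j+1) \ E j) (fun _ => 2 * ell c (j+1)) x ∂μ :=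
          lintegral_tsum fun j => (measurable_const.indicator
            ((hEmeas (j+1)).diff (hEmeas j))).aemeasurable
      _ = ∑' j, (2 * ell c (j+1)) * μ (E (j+1) \ E j) := by
          refine tsum_congr fun j => ?_
          exact lintegral_indicator_const ((hEmeas (j+1)).diff (hEmeas j)) _
  -- bound measures of E by crossings
  have hE_aJ : ∀ j : ℕ, μ (E (j+1)) ≤ ∑' j', (if j' ≤ j + 1 then aJ μ g c j' else 0) := by
    intro j
    have hsub : E (j+1) ⊆ ⋃ j', ⋃ (_ : j' ≤ j + 1), ⋃ k, Ctop g (lev c) j' k := by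
      intro x hxE
      have hexk : ∃ k, lev c (j+1) < |g k x| := by
        have hxE' : ell c (j+1) < ⨆ k, ENNReal.ofReal |g k x| := hxE
        rcases lt_iSup_iff.1 hxE' with ⟨k, hk⟩
        refine ⟨k, ?_⟩
        by_contra hcon
        exact absurd (ENNReal.ofReal_le_ofReal (not_lt.1 hcon)) (not_le.2 hk)
      set k₀ := Nat.find hexk with hk₀def
      have hxC : x ∈ Cset g (lev c) (j+1) k₀ := by
        refine ⟨Nat.find_spec hexk, ?_⟩
        simp only [Set.mem_iInter]
        intro m hm
        exact not_lt.1 (Nat.find_min hexk hm)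
      rcases Set.mem_iUnion.1 (Cset_subset_biUnion_Ctop (j+1) k₀ hxC) with ⟨j', hj'⟩
      rcases Set.mem_iUnion.1 hj' with ⟨hj'le, hj'mem⟩
      exact Set.mem_iUnion.2 ⟨j', Set.mem_iUnion.2 ⟨hj'le, Set.mem_iUnion.2 ⟨k₀, hj'mem⟩⟩⟩
    calc μ (E (j+1)) ≤ μ (⋃ j', ⋃ (_ : j' ≤ j + 1), ⋃ k, Ctop g (lev c) j' k) :=
          measure_mono hsub
      _ ≤ ∑' j', μ (⋃ (_ : j' ≤ j + 1), ⋃ k, Ctop g (lev c) j' k) := measure_iUnion_le _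
      _ ≤ ∑' j', (if j' ≤ j + 1 then aJ μ g c j' else 0) := by
          refine ENNReal.tsum_le_tsum fun j' => ?_
          by_cases h : j' ≤ j + 1
          · simp only [h, Set.iUnion_true, if_true]
            exact measure_iUnion_le _
          · simp [h]
  -- the tail bound
  have htail : ∀ j' : ℕ, (∑' j, (if j' ≤ j + 1 then ell c j else 0)) ≤ 4 * ell c j' := by
    intro j'
    cases j' with
    | zero =>
        have h1 : (∑' j : ℕ, (if (0:ℕ) ≤ j + 1 then ell c j else 0))
            = ∑' j : ℕ, (if 0 ≤ j then ell c j else 0) :=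
          tsum_congr fun j => if_congr (by omega) rfl rfl
        rw [h1, geom_tail (le_of_lt hc) 0]
        calc (2:ℝ≥0∞) * ell c 0 ≤ 4 * ell c 0 := by
              exact mul_le_mul_left (by norm_num) _
    | succ i =>
        have h1 : (∑' j : ℕ, (if i + 1 ≤ j + 1 then ell c j else 0))
            = ∑' j : ℕ, (if i ≤ j then ell c j else 0) :=
          tsum_congr fun j => if_congr (by omega) rfl rfl
        rw [h1, geom_tail (le_of_lt hc) i, ← two_mul_ell_succ (le_of_lt hc) i, ← mul_assoc]
        exact mul_le_mul_left (by norm_num) _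
  -- put it together
  calc ∫⁻ x, ENNReal.ofReal (⨆ k, |g k x|) ∂μ
      ≤ ∑' j, (2 * ell c (j+1)) * μ (E (j+1) \ E j) := hint
    _ ≤ ∑' j, ell c j * μ (E (j+1)) := by
        refine ENNReal.tsum_le_tsum fun j => ?_
        rw [two_mul_ell_succ (le_of_lt hc) j]
        exact mul_le_mul_right (measure_mono Set.diff_subset) _
    _ ≤ ∑' j, ell c j * ∑' j', (if j' ≤ j + 1 then aJ μ g c j' else 0) :=
        ENNReal.tsum_le_tsum fun j => mul_le_mul_right (hE_aJ j) _
    _ = ∑' j, ∑' j', (if j' ≤ j + 1 then ell c j * aJ μ g c j' else 0) := by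
        refine tsum_congr fun j => ?_
        rw [← ENNReal.tsum_mul_left]
        exact tsum_congr fun j' => by rw [mul_ite, mul_zero]
    _ = ∑' j', ∑' j, (if j' ≤ j + 1 then ell c j * aJ μ g c j' else 0) := ENNReal.tsum_comm
    _ = ∑' j', aJ μ g c j' * ∑' j, (if j' ≤ j + 1 then ell c j else 0) := by
        refine tsum_congr fun j' => ?_
        rw [← ENNReal.tsum_mul_left]
        exact tsum_congr fun j => by rw [mul_ite, mul_zero, mul_comm]
    _ ≤ ∑' j', aJ μ g c j' * (4 * ell c j') :=
        ENNReal.tsum_le_tsum fun j' => mul_le_mul_right (htail j') _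
    _ = 4 * ∑' j', ell c j' * aJ μ g c j' := by
        rw [← ENNReal.tsum_mul_left]
        exact tsum_congr fun j' => by ring

/-- M_S is pointwise a.e. below A_S. -/
theorem MS_le_AS (hc : 0 < c) (hbd : ∀ᵐ x ∂μ, ∀ k, |g k x| ≤ c) :
    ∀ᵐ x ∂μ, ENNReal.ofReal
        (⨆ k, Set.indicator (Sunion μ ℱ g (lev c) k) (fun z => |g k z|) x)
      ≤ ∑' k, Set.indicator (Sunion μ ℱ g (lev c) k)
          (fun z => ENNReal.ofReal |g k z|) x := by
  filter_upwards [hbd] with x hx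
  set T := ∑' k, Set.indicator (Sunion μ ℱ g (lev c) k)
      (fun z => ENNReal.ofReal |g k z|) x with hTdef
  have hterm : ∀ k, Set.indicator (Sunion μ ℱ g (lev c) k)
      (fun z => ENNReal.ofReal |g k z|) x
      = ENNReal.ofReal (Set.indicator (Sunion μ ℱ g (lev c) k) (fun z => |g k z|) x) := by
    intro k
    by_cases hmem : x ∈ Sunion μ ℱ g (lev c) k
    · rw [Set.indicator_of_mem hmem, Set.indicator_of_mem hmem]
    · rw [Set.indicator_of_notMem hmem, Set.indicator_of_notMem hmem, ENNReal.ofReal_zero]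
  by_cases hT : T = ∞
  · rw [hT]; exact le_top
  have hle : ∀ k, Set.indicator (Sunion μ ℱ g (lev c) k) (fun z => |g k z|) x
      ≤ T.toReal := by
    intro k
    have h1 : ENNReal.ofReal (Set.indicator (Sunion μ ℱ g (lev c) k)
        (fun z => |g k z|) x) ≤ T := by
      rw [← hterm k]
      exact ENNReal.le_tsum k
    have hnn : 0 ≤ Set.indicator (Sunion μ ℱ g (lev c) k) (fun z => |g k z|) x :=
      Set.indicator_nonneg (fun z _ => abs_nonneg _) x
    calc Set.indicator (Sunion μ ℱ g (lev c) k) (fun z => |g k z|) x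
        = (ENNReal.ofReal (Set.indicator (Sunion μ ℱ g (lev c) k)
            (fun z => |g k z|) x)).toReal := (ENNReal.toReal_ofReal hnn).symm
      _ ≤ T.toReal := ENNReal.toReal_mono hT h1
  calc ENNReal.ofReal (⨆ k, Set.indicator (Sunion μ ℱ g (lev c) k) (fun z => |g k z|) x)
      ≤ ENNReal.ofReal T.toReal := ENNReal.ofReal_le_ofReal (ciSup_le hle)
    _ = T := ENNReal.ofReal_toReal hT

/-- The master inequality. -/
theorem master (hc : 0 < c) (hgm : ∀ k, StronglyMeasurable[ℱ k] (g k))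
    (hbd : ∀ᵐ x ∂μ, ∀ k, |g k x| ≤ c) :
    ∫⁻ x, ENNReal.ofReal (⨆ k, |g k x|) ∂μ ≤
      24 * ∫⁻ x, ENNReal.ofReal
        (⨆ k, Set.indicator (Sunion μ ℱ g (lev c) k) (fun z => |g k z|) x) ∂μ := by
  have h24 : (24 : ℝ≥0∞) * 2⁻¹ = 12 := by
    rw [show (24:ℝ≥0∞) = 12 * 2 by norm_num, mul_assoc,
      ENNReal.mul_inv_cancel (by norm_num) (by norm_num), mul_one]
  calc ∫⁻ x, ENNReal.ofReal (⨆ k, |g k x|) ∂μ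
      ≤ 4 * ∑' j, ell c j * aJ μ g c j := upper_bound μ ℱ hc hgm hbd
    _ ≤ 4 * (3 * ∑' j, ell c j * sJ μ ℱ g c j) :=
        mul_le_mul_right (main_sum μ ℱ hc hgm) _
    _ = 24 * (2⁻¹ * ∑' j, ell c j * sJ μ ℱ g c j) := by
        rw [← mul_assoc, ← mul_assoc, h24]
        norm_num
    _ ≤ 24 * ∫⁻ x, ENNReal.ofReal
          (⨆ k, Set.indicator (Sunion μ ℱ g (lev c) k) (fun z => |g k z|) x) ∂μ :=
        mul_le_mul_right (lower_bound μ ℱ hc hgm hbd) _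

/-- The master inequality, sum form. -/
theorem master' (hc : 0 < c) (hgm : ∀ k, StronglyMeasurable[ℱ k] (g k))
    (hbd : ∀ᵐ x ∂μ, ∀ k, |g k x| ≤ c) :
    ∫⁻ x, ENNReal.ofReal (⨆ k, |g k x|) ∂μ ≤
      24 * ∫⁻ x, (∑' k, Set.indicator (Sunion μ ℱ g (lev c) k)
        (fun z => ENNReal.ofReal |g k z|) x) ∂μ := by
  refine le_trans (master μ ℱ hc hgm hbd) (mul_le_mul_right ?_ _)
  exact lintegral_mono_ae (MS_le_AS μ ℱ hc hbd)

end Measure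

end Lemmas

end SparseAux

open SparseAux

theorem stmt4 {Ω : Type*} {m0 : MeasurableSpace Ω} (μ : Measure Ω) [IsProbabilityMeasure μ]
    (ℱ : Filtration ℕ m0) (hgen : (⨆ k, (ℱ k : MeasurableSpace Ω)) = m0)
    (r : ℝ) (hr : 0 < r) (hr' : r ≤ 1 / 2) :
    ∃ C : ℝ, 0 < C ∧
      ∀ f : Ω → ℝ, MemLp f ⊤ μ →
        ∃ S : ℕ → Set Ω, IsSparseAdaptedSeq μ ℱ (1 / 2) S ∧
          -- ‖M f‖_{L¹} ≤ C ‖M_S f‖_{L¹}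
          (∫⁻ x, ENNReal.ofReal (⨆ k : ℕ, |(μ[f | ℱ k]) x|) ∂μ) ≤
            ENNReal.ofReal C *
              ∫⁻ x, ENNReal.ofReal
                (⨆ k : ℕ, Set.indicator (S k) (fun z => |(μ[f | ℱ k]) z|) x) ∂μ ∧
          -- ‖M f‖_{L¹} ≤ C ‖A_S f‖_{L¹}
          (∫⁻ x, ENNReal.ofReal (⨆ k : ℕ, |(μ[f | ℱ k]) x|) ∂μ) ≤
            ENNReal.ofReal C *
              ∫⁻ x, (∑' k : ℕ,
                Set.indicator (S k) (fun z => ENNReal.ofReal |(μ[f | ℱ k]) z|) x) ∂μ := by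
  refine ⟨24, by norm_num, fun f hf => ?_⟩
  have h24 : ENNReal.ofReal (24:ℝ) = 24 := by norm_num
  by_cases hN : eLpNorm f ⊤ μ = 0
  · -- trivial case : f = 0 a.e.
    have hf0 : f =ᵐ[μ] 0 := by
      rw [← eLpNorm_eq_zero_iff (p := ⊤) hf.aestronglyMeasurable (by simp)]
      exact hN
    have hall : ∀ᵐ x ∂μ, ∀ k, (μ[f|ℱ k]) x = 0 := by
      refine ae_all_iff.2 fun k => ?_
      have h1 := condExp_congr_ae (m := ℱ k) (μ := μ) hf0
      have h2 : μ[(0 : Ω → ℝ)|ℱ k] = 0 := condExp_zero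
      rw [h2] at h1
      exact h1
    have hLHS : (∫⁻ x, ENNReal.ofReal (⨆ k : ℕ, |(μ[f | ℱ k]) x|) ∂μ) = 0 := by
      have : ∀ᵐ x ∂μ, ENNReal.ofReal (⨆ k : ℕ, |(μ[f | ℱ k]) x|) = 0 := by
        filter_upwards [hall] with x hx
        have heq : (fun k : ℕ => |(μ[f|ℱ k]) x|) = fun _ => (0:ℝ) :=
          funext fun k => by rw [hx k, abs_zero]
        rw [heq, ciSup_const, ENNReal.ofReal_zero]
      rw [lintegral_congr_ae this, lintegral_zero]
    refine ⟨fun _ => (∅ : Set Ω), ⟨fun k => @MeasurableSet.empty Ω (ℱ k),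
      fun k A hA hAm => ?_⟩, ?_, ?_⟩
    · rw [Set.subset_empty_iff] at hA
      subst hA
      simp
    · rw [hLHS]; exact zero_le
    · rw [hLHS]; exact zero_le
  · -- main case
    set c : ℝ := (eLpNorm f ⊤ μ).toReal with hcdef
    have hNtop : eLpNorm f ⊤ μ ≠ ∞ := ne_of_lt hf.2
    have hc : 0 < c := ENNReal.toReal_pos hN hNtop
    have hgm : ∀ k, StronglyMeasurable[ℱ k] ((fun k => μ[f|ℱ k]) k) :=
      fun k => stronglyMeasurable_condExp
    have hbdf : ∀ᵐ x ∂μ, |f x| ≤ ((eLpNorm f ⊤ μ).toNNReal : ℝ) := by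
      have h1 : ∀ᵐ y ∂μ, (‖f y‖₊ : ℝ≥0∞) ≤ eLpNormEssSup f μ := ae_le_eLpNormEssSup
      filter_upwards [h1] with y hy
      have hy' : (‖f y‖₊ : ℝ≥0∞) ≤ eLpNorm f ⊤ μ := by
        rwa [eLpNorm_exponent_top]
      rw [← ENNReal.coe_toNNReal hNtop, ENNReal.coe_le_coe] at hy'
      calc |f y| = (‖f y‖₊ : ℝ) := by rw [coe_nnnorm, Real.norm_eq_abs]
        _ ≤ ((eLpNorm f ⊤ μ).toNNReal : ℝ) := NNReal.coe_le_coe.2 hy'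
    have hbd : ∀ᵐ x ∂μ, ∀ k, |(fun k => μ[f|ℱ k]) k x| ≤ c := by
      refine ae_all_iff.2 fun k => ?_
      have := ae_bdd_condExp_of_ae_bdd (m := ℱ k) hbdf
      filter_upwards [this] with x hx
      exact hx
    refine ⟨Sunion μ ℱ (fun k => μ[f|ℱ k]) (lev c),
      ⟨fun k => measurableSet_Sunion μ ℱ hgm k,
        fun k A hA hAm => sparse_bound μ ℱ hc hgm k A hA hAm⟩, ?_, ?_⟩
    · rw [h24]
      exact master μ ℱ hc hgm hbd
    · rw [h24]
      exact master' μ ℱ hc hgm hbd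
end

section
/- Let (Ω, F, μ) be a probability space with a filtration {F_k}_{k≥0} of sub-σ-algebras whose union generates F. For every f ∈ L^1(Ω) and every 1/2-sparse adapted sequence S = {S_k}_{k≥0}, one has ‖A_S f‖_{L^1(Ω)} ≤ 2 ‖M f‖_{L^1(Ω)}, where A_S f := Σ_{k≥0} 1_{S_k} |E_k f| and M f := sup_{k≥0} |E_k f| is Doob's maximal function. -/
open MeasureTheory
open scoped ENNReal

theorem stmt5 {Ω : Type*} {m0 : MeasurableSpace Ω} (μ : Measure Ω) [IsProbabilityMeasure μ]
    (ℱ : Filtration ℕ m0) (hgen : (⨆ k, (ℱ k : MeasurableSpace Ω)) = m0)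
    (f : Ω → ℝ) (hf : Integrable f μ)
    (S : ℕ → Set Ω) (hS : IsSparseAdaptedSeq μ ℱ (1 / 2) S) :
    (∫⁻ x, (∑' k : ℕ,
        Set.indicator (S k) (fun z => ENNReal.ofReal |(μ[f | ℱ k]) z|) x) ∂μ) ≤
      2 * ∫⁻ x, ENNReal.ofReal (⨆ k : ℕ, |(μ[f | ℱ k]) x|) ∂μ := by
  obtain ⟨hSmeas, hSsparse⟩ := hS
  set g : ℕ → Ω → ℝ := fun k => μ[f | ℱ k] with hgdef
  have hgm : ∀ k, Measurable (g k) :=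
    fun k => (stronglyMeasurable_condExp.mono (ℱ.le k)).measurable
  set E : ℕ → Set Ω := fun k => S k \ ⋃ m, ⋃ (_ : k + 1 ≤ m), S m with hEdef
  have hSm0 : ∀ k, MeasurableSet (S k) := fun k => ℱ.le k _ (hSmeas k)
  have hEm : ∀ k, MeasurableSet (E k) := fun k =>
    (hSm0 k).diff (MeasurableSet.iUnion fun m => MeasurableSet.iUnion fun _ => hSm0 m)
  have hEdisj : Pairwise (Function.onFun Disjoint E) := by
    have key : ∀ i j : ℕ, i < j → Disjoint (E i) (E j) := by
      intro i j h
      refine Set.disjoint_left.2 fun x hxi hxj => ?_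
      exact hxi.2 (Set.mem_iUnion.2 ⟨j, Set.mem_iUnion.2 ⟨h, hxj.1⟩⟩)
    intro i j hij
    rcases hij.lt_or_gt with h | h
    · exact key i j h
    · exact (key j i h).symm
  -- the constant 2
  have h2 : (2 : ℝ≥0∞) * ENNReal.ofReal (1 / 2) = 1 := by
    rw [show ((1 : ℝ) / 2) = (2 : ℝ)⁻¹ by norm_num,
      ENNReal.ofReal_inv_of_pos (by norm_num), ENNReal.ofReal_ofNat]
    simp [ENNReal.mul_inv_cancel]
  -- key sparse bound
  have key2 : ∀ k, ∫⁻ x in S k, ENNReal.ofReal |g k x| ∂μ ≤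
      2 * ∫⁻ x in E k, ENNReal.ofReal |g k x| ∂μ := by
    intro k
    have habs1 : AEMeasurable (fun x => |g k x|) (μ.restrict (S k)) :=
      ((hgm k).abs).aemeasurable
    have habs2 : AEMeasurable (fun x => |g k x|) (μ.restrict (E k)) :=
      ((hgm k).abs).aemeasurable
    rw [lintegral_eq_lintegral_meas_lt _ (ae_of_all _ fun x => abs_nonneg _) habs1,
      lintegral_eq_lintegral_meas_lt _ (ae_of_all _ fun x => abs_nonneg _) habs2,
      ← lintegral_const_mul' 2 _ (by norm_num)]
    refine lintegral_mono fun t => ?_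
    have hAsetF : MeasurableSet[ℱ k] {a | t < |g k a|} := by
      have hm0 : StronglyMeasurable[ℱ k] (g k) := stronglyMeasurable_condExp
      letI : MeasurableSpace Ω := ℱ k
      exact hm0.measurable.abs measurableSet_Ioi
    have hAm0 : MeasurableSet {a | t < |g k a|} := ℱ.le k _ hAsetF
    rw [Measure.restrict_apply hAm0, Measure.restrict_apply hAm0]
    have hsp := hSsparse k ({a | t < |g k a|} ∩ S k) Set.inter_subset_right
      (hAsetF.inter (hSmeas k))
    have heq : ({a | t < |g k a|} ∩ S k) \ (⋃ m, ⋃ (_ : k + 1 ≤ m), S m) =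
        {a | t < |g k a|} ∩ E k := by
      rw [hEdef]
      ext x
      simp only [Set.mem_diff, Set.mem_inter_iff]
      tauto
    rw [heq] at hsp
    calc μ ({a | t < |g k a|} ∩ S k)
        = 2 * (ENNReal.ofReal (1 / 2) * μ ({a | t < |g k a|} ∩ S k)) := by
          rw [← mul_assoc, h2, one_mul]
      _ ≤ 2 * μ ({a | t < |g k a|} ∩ E k) := by
          exact mul_le_mul_right hsp 2
  -- a.e. pointwise domination by the maximal function
  have hae : ∀ᵐ x ∂μ, ∀ k, |g k x| ≤ ⨆ j, |g j x| := by
    set f' := hf.1.mk f with hf'def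
    have hmk : f =ᵐ[μ] f' := hf.1.ae_eq_mk
    have hf' : Integrable f' μ := hf.congr hmk
    have hf'meas : StronglyMeasurable[⨆ n, ℱ n] f' := by
      rw [hgen]; exact hf.1.stronglyMeasurable_mk
    have htendsto := hf'.tendsto_ae_condExp hf'meas
    have hcongr : ∀ᵐ x ∂μ, ∀ n, (μ[f' | ℱ n]) x = g n x := by
      rw [ae_all_iff]
      exact fun n => (condExp_congr_ae hmk.symm : μ[f' | ℱ n] =ᵐ[μ] μ[f | ℱ n])
    filter_upwards [htendsto, hcongr] with x hx hcx k
    have hx' : Filter.Tendsto (fun n => |g n x|) Filter.atTop (nhds |f' x|) := by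
      have := hx.abs
      simpa only [hcx] using this
    exact le_ciSup hx'.bddAbove_range k
  -- assemble
  have hMF : ∀ k, ∫⁻ x in E k, ENNReal.ofReal |g k x| ∂μ ≤
      ∫⁻ x in E k, ENNReal.ofReal (⨆ j, |g j x|) ∂μ := by
    intro k
    refine lintegral_mono_ae ?_
    filter_upwards [ae_restrict_of_ae hae] with x hx
    exact ENNReal.ofReal_le_ofReal (hx k)
  calc (∫⁻ x, (∑' k : ℕ, Set.indicator (S k) (fun z => ENNReal.ofReal |g k z|) x) ∂μ)
      = ∑' k : ℕ, ∫⁻ x, Set.indicator (S k) (fun z => ENNReal.ofReal |g k z|) x ∂μ := by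
        exact lintegral_tsum fun k =>
          (((hgm k).abs.ennreal_ofReal).indicator (hSm0 k)).aemeasurable
    _ = ∑' k : ℕ, ∫⁻ x in S k, ENNReal.ofReal |g k x| ∂μ := by
        refine tsum_congr fun k => ?_
        rw [lintegral_indicator (hSm0 k)]
    _ ≤ ∑' k : ℕ, 2 * ∫⁻ x in E k, ENNReal.ofReal |g k x| ∂μ :=
        ENNReal.tsum_le_tsum fun k => key2 k
    _ ≤ ∑' k : ℕ, 2 * ∫⁻ x in E k, ENNReal.ofReal (⨆ j, |g j x|) ∂μ :=
        ENNReal.tsum_le_tsum fun k => mul_le_mul_right (hMF k) 2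
    _ = 2 * ∑' k : ℕ, ∫⁻ x in E k, ENNReal.ofReal (⨆ j, |g j x|) ∂μ :=
        ENNReal.tsum_mul_left
    _ = 2 * ∫⁻ x in ⋃ k, E k, ENNReal.ofReal (⨆ j, |g j x|) ∂μ := by
        rw [lintegral_iUnion hEm hEdisj]
    _ ≤ 2 * ∫⁻ x, ENNReal.ofReal (⨆ j, |g j x|) ∂μ :=
        mul_le_mul_right (setLIntegral_le_lintegral _ _) 2
end

section
/- Let (X, μ) be a measure space and let E be a finite collection of measurable sets R ⊆ X with 0 < μ(R) < ∞. Let f : X → ℝ be integrable on each R ∈ E. Then there exists a subfamily S ⊆ E which is 1/2-sparse (i.e., for each R ∈ S there is a measurable set E_R ⊆ R with μ(E_R) ≥ μ(R)/2 and the sets {E_R}_{R∈S} are pairwise disjoint) such that M_E f(x) ≤ P_E^{1/2}(M_S f)(x) for every x ∈ X, where M_E f := sup_{R∈E} |⟨f⟩_R| 1_R, M_S f := sup_{R∈S} |⟨f⟩_R| 1_R, and P_E^{1/2}(g) := sup_{R∈E} P_R^{1/2}(g) 1_R. -/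
open MeasureTheory
open scoped ENNReal

/-- The average `⟨f⟩_R = μ(R)⁻¹ ∫_R f dμ`. -/
noncomputable def setAvg {X : Type*} [MeasurableSpace X] (μ : Measure X) (R : Set X)
    (f : X → ℝ) : ℝ :=
  (μ R).toReal⁻¹ * ∫ x in R, f x ∂μ

/-- The percentile of `g` over `R` at ratio `r`:
`P_R^r(g) = inf{ λ ∈ ℝ : μ({x ∈ R : g(x) > λ}) ≤ r μ(R) }`. -/
noncomputable def setPerc {X : Type*} [MeasurableSpace X] (μ : Measure X) (R : Set X)
    (r : ℝ) (g : X → ℝ) : ℝ :=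
  sInf {l : ℝ | μ {x ∈ R | g x > l} ≤ ENNReal.ofReal r * μ R}

/-- Greedy sparse selection, processing sets in decreasing order of `a`. -/
private lemma selection_aux {X : Type*} [MeasurableSpace X] (μ : Measure X)
    (a : Set X → ℝ) :
    ∀ (n : ℕ) (F T : Finset (Set X)), F.card ≤ n →
      (∀ R ∈ F, MeasurableSet R ∧ 0 < μ R ∧ μ R < ⊤) →
      (∀ R ∈ T, MeasurableSet R) →
      (∀ R' ∈ T, ∀ R ∈ F, a R ≤ a R') →
      ∃ (S : Finset (Set X)) (Esel : Set X → Set X),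
        S ⊆ F ∧
        (∀ R ∈ S, MeasurableSet (Esel R) ∧ Esel R ⊆ R \ ⋃₀ (↑T : Set (Set X)) ∧
          μ R ≤ 2 * μ (Esel R)) ∧
        (S : Set (Set X)).PairwiseDisjoint Esel ∧
        (∀ R ∈ F, μ R < 2 * μ {x | x ∈ R ∧ ∃ R', (R' ∈ S ∨ R' ∈ T) ∧ x ∈ R' ∧ a R ≤ a R'}) := by
  classical
  intro n
  induction n with
  | zero =>
    intro F T hcard _ _ _
    have hF : F = ∅ := Finset.card_eq_zero.mp (Nat.le_zero.mp hcard)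
    subst hF
    exact ⟨∅, fun _ => ∅, Finset.empty_subset _, by simp, by simp, by simp⟩
  | succ n ih =>
    intro F T hcard hF hT hdom
    rcases F.eq_empty_or_nonempty with rfl | hne
    · exact ⟨∅, fun _ => ∅, Finset.empty_subset _, by simp, by simp, by simp⟩
    obtain ⟨R₀, hR₀F, hmax⟩ := F.exists_max_image a hne
    obtain ⟨hR₀m, hR₀pos, hR₀top⟩ := hF R₀ hR₀F
    have hU : MeasurableSet (⋃₀ (↑T : Set (Set X))) :=
      T.finite_toSet.measurableSet_sUnion (fun t ht => hT t ht)
    have hcard' : (F.erase R₀).card ≤ n := by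
      have := Finset.card_erase_of_mem hR₀F
      omega
    by_cases hsel : μ R₀ ≤ 2 * μ (R₀ \ ⋃₀ (↑T : Set (Set X)))
    · -- select R₀
      obtain ⟨S', Esel', hsub', hb', hc', hd'⟩ :=
        ih (F.erase R₀) (insert R₀ T) hcard'
          (fun R hR => hF R (Finset.mem_of_mem_erase hR))
          (fun R hR => by
            rcases Finset.mem_insert.mp hR with rfl | hR
            · exact hR₀m
            · exact hT R hR)
          (fun R' hR' R hR => by
            rcases Finset.mem_insert.mp hR' with rfl | hR'
            · exact hmax R (Finset.mem_of_mem_erase hR)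
            · exact hdom R' hR' R (Finset.mem_of_mem_erase hR))
      have hR₀S' : R₀ ∉ S' := fun h => (Finset.mem_erase.mp (hsub' h)).1 rfl
      have hTsub : ⋃₀ (↑T : Set (Set X)) ⊆ ⋃₀ (↑(insert R₀ T) : Set (Set X)) :=
        Set.sUnion_mono (by simp [Finset.coe_insert, Set.subset_insert])
      have hR₀subU : R₀ ⊆ ⋃₀ (↑(insert R₀ T) : Set (Set X)) := by
        intro y hy
        exact ⟨R₀, by simp, hy⟩
      refine ⟨insert R₀ S', Function.update Esel' R₀ (R₀ \ ⋃₀ (↑T : Set (Set X))),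
        ?_, ?_, ?_, ?_⟩
      · intro R hR
        rcases Finset.mem_insert.mp hR with rfl | hR
        · exact hR₀F
        · exact Finset.mem_of_mem_erase (hsub' hR)
      · intro R hR
        rcases Finset.mem_insert.mp hR with rfl | hR
        · rw [Function.update_self]
          exact ⟨hR₀m.diff hU, subset_rfl, hsel⟩
        · have hne' : R ≠ R₀ := fun h => hR₀S' (h ▸ hR)
          rw [Function.update_of_ne hne']
          obtain ⟨h1, h2, h3⟩ := hb' R hR
          exact ⟨h1, h2.trans (Set.diff_subset_diff_right hTsub), h3⟩
      · rw [Finset.coe_insert]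
        apply Set.pairwiseDisjoint_insert.mpr
        constructor
        · intro x hx y hy hxy
          have hxne : x ≠ R₀ := fun h => hR₀S' (h ▸ hx)
          have hyne : y ≠ R₀ := fun h => hR₀S' (h ▸ hy)
          have := hc' hx hy hxy
          simp only [Function.onFun, Function.update_of_ne hxne, Function.update_of_ne hyne]
          exact this
        · intro b hb hbne
          have hbne' : b ≠ R₀ := fun h => hbne h.symm
          rw [Function.update_self, Function.update_of_ne hbne']
          apply Set.disjoint_left.mpr
          intro y hy hyb
          have h2 := (hb' b hb).2.1 hyb
          exact h2.2 (hR₀subU hy.1)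
      · intro R hR
        by_cases hRR₀ : R = R₀
        · subst hRR₀
          have hWeq : {x | x ∈ R ∧ ∃ R', (R' ∈ insert R S' ∨ R' ∈ T) ∧ x ∈ R' ∧ a R ≤ a R'}
              = R := by
            apply Set.eq_of_subset_of_subset (fun x hx => hx.1)
            intro x hx
            exact ⟨hx, R, Or.inl (Finset.mem_insert_self _ _), hx, le_rfl⟩
          rw [hWeq, two_mul]
          exact ENNReal.lt_add_right hR₀top.ne hR₀pos.ne'
        · have hRer : R ∈ F.erase R₀ := Finset.mem_erase.mpr ⟨hRR₀, hR⟩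
          refine lt_of_lt_of_le (hd' R hRer) (mul_le_mul_right (measure_mono ?_) 2)
          rintro x ⟨hxR, R', hR'mem, hxR', hle⟩
          refine ⟨hxR, R', ?_, hxR', hle⟩
          rcases hR'mem with h | h
          · exact Or.inl (Finset.mem_insert_of_mem h)
          · rcases Finset.mem_insert.mp h with rfl | h
            · exact Or.inl (Finset.mem_insert_self _ _)
            · exact Or.inr h
    · -- do not select R₀
      obtain ⟨S', Esel', hsub', hb', hc', hd'⟩ :=
        ih (F.erase R₀) T hcard'
          (fun R hR => hF R (Finset.mem_of_mem_erase hR)) hT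
          (fun R' hR' R hR => hdom R' hR' R (Finset.mem_of_mem_erase hR))
      refine ⟨S', Esel', fun R hR => Finset.mem_of_mem_erase (hsub' hR), hb', hc', ?_⟩
      intro R hR
      by_cases hRR₀ : R = R₀
      · subst hRR₀
        set U := ⋃₀ (↑T : Set (Set X)) with hUdef
        have hAB : μ (R ∩ U) + μ (R \ U) = μ R := measure_inter_add_diff R hU
        have hAtop : μ (R ∩ U) ≠ ⊤ :=
          ((measure_mono Set.inter_subset_left).trans_lt hR₀top).ne
        have hBtop : μ (R \ U) ≠ ⊤ :=
          ((measure_mono Set.diff_subset).trans_lt hR₀top).ne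
        have h1 : 2 * μ (R \ U) < μ R := not_le.mp hsel
        have hBA : μ (R \ U) < μ (R ∩ U) := by
          have h2 : μ (R \ U) + μ (R \ U) < μ (R ∩ U) + μ (R \ U) := by
            rw [hAB]; rw [two_mul] at h1; exact h1
          exact (ENNReal.add_lt_add_iff_right hBtop).mp h2
        have h3 : μ R < 2 * μ (R ∩ U) := by
          rw [← hAB, two_mul]
          exact ENNReal.add_lt_add_left hAtop hBA
        refine lt_of_lt_of_le h3 (mul_le_mul_right (measure_mono ?_) 2)
        rintro x ⟨hxR, hxU⟩
        obtain ⟨R', hR'T, hxR'⟩ := hxU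
        have hR'T' : R' ∈ T := hR'T
        exact ⟨hxR, R', Or.inr hR'T', hxR', hdom R' hR'T' R hR₀F⟩
      · exact hd' R (Finset.mem_erase.mpr ⟨hRR₀, hR⟩)

theorem stmt6 {X : Type*} [MeasurableSpace X] (μ : Measure X)
    (E : Finset (Set X))
    (hE : ∀ R ∈ E, MeasurableSet R ∧ 0 < μ R ∧ μ R < ⊤)
    (f : X → ℝ) (hf : ∀ R ∈ E, IntegrableOn f R μ) :
    ∃ S : Finset (Set X), S ⊆ E ∧
      -- S is 1/2-sparse
      (∃ Esel : Set X → Set X,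
        (∀ R ∈ S, MeasurableSet (Esel R) ∧ Esel R ⊆ R ∧ μ R ≤ 2 * μ (Esel R)) ∧
        (S : Set (Set X)).PairwiseDisjoint Esel) ∧
      -- pointwise domination M_E f ≤ P_E^{1/2}(M_S f)
      ∀ x : X,
        (⨆ R ∈ E, Set.indicator R (fun _ => |setAvg μ R f|) x) ≤
          ⨆ R ∈ E, Set.indicator R
            (fun _ => setPerc μ R (1 / 2)
              (fun y => ⨆ R' ∈ S, Set.indicator R' (fun _ => |setAvg μ R' f|) y)) x := by
  classical
  obtain ⟨S, Esel, hsub, hb, hc, hd⟩ :=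
    selection_aux μ (fun R => |setAvg μ R f|) E.card E ∅ le_rfl hE (by simp) (by simp)
  refine ⟨S, hsub, ⟨Esel, fun R hR => ?_, hc⟩, ?_⟩
  · obtain ⟨h1, h2, h3⟩ := hb R hR
    exact ⟨h1, h2.trans Set.diff_subset, h3⟩
  -- pointwise bound
  set g : X → ℝ := fun y => ⨆ R' ∈ S, Set.indicator R' (fun _ => |setAvg μ R' f|) y with hgdef
  set B : ℝ := ∑ R' ∈ S, |setAvg μ R' f| with hBdef
  have hB0 : 0 ≤ B := Finset.sum_nonneg (fun _ _ => abs_nonneg _)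
  have hBi : ∀ R' ∈ S, |setAvg μ R' f| ≤ B := by
    intro R' h
    rw [hBdef]
    exact Finset.single_le_sum (f := fun R'' => |setAvg μ R'' f|) (fun i _ => abs_nonneg _) h
  have hg0 : ∀ y, 0 ≤ g y := fun y =>
    Real.iSup_nonneg fun R' => Real.iSup_nonneg fun _ =>
      Set.indicator_nonneg (fun _ _ => abs_nonneg _) y
  have hgB : ∀ y, g y ≤ B := fun y =>
    Real.iSup_le (fun R' =>
      Real.iSup_le (fun hR' =>
        Set.indicator_apply_le' (fun _ => hBi R' hR') (fun _ => hB0)) hB0) hB0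
  have hgmem : ∀ R' ∈ S, ∀ y ∈ R', |setAvg μ R' f| ≤ g y := by
    intro R' hR' y hy
    have hbdd : BddAbove (Set.range fun R'' =>
        ⨆ (_ : R'' ∈ S), Set.indicator R'' (fun _ => |setAvg μ R'' f|) y) := by
      refine ⟨B, ?_⟩
      rintro _ ⟨R'', rfl⟩
      exact Real.iSup_le (fun h =>
        Set.indicator_apply_le' (fun _ => hBi R'' h) (fun _ => hB0)) hB0
    calc |setAvg μ R' f|
        = Set.indicator R' (fun _ => |setAvg μ R' f|) y := (Set.indicator_of_mem hy (fun _ => |setAvg μ R' f|)).symm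
      _ = ⨆ (_ : R' ∈ S), Set.indicator R' (fun _ => |setAvg μ R' f|) y := by
          haveI : Nonempty (R' ∈ S) := ⟨hR'⟩
          exact ciSup_const.symm
      _ ≤ g y := le_ciSup hbdd R'
  have hhalf : ENNReal.ofReal (1 / 2) * 2 = 1 := by
    rw [show (1 / 2 : ℝ) = (2 : ℝ)⁻¹ by norm_num,
      ENNReal.ofReal_inv_of_pos (by norm_num : (0:ℝ) < 2), ENNReal.ofReal_ofNat,
      ENNReal.inv_mul_cancel (by norm_num) (by norm_num)]
  have hperc : ∀ R ∈ E, |setAvg μ R f| ≤ setPerc μ R (1 / 2) g := by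
    intro R hRE
    apply le_csInf
    · refine ⟨B, ?_⟩
      have hempty : {x ∈ R | g x > B} = ∅ := by
        ext x
        simp only [Set.mem_setOf_eq, Set.mem_empty_iff_false, iff_false, not_and]
        intro _
        exact not_lt.mpr (hgB x)
      simp [Set.mem_setOf_eq, hempty]
    · intro l hl
      by_contra hcon
      push_neg at hcon
      have hdR := hd R hRE
      have hWsub : {x | x ∈ R ∧ ∃ R', (R' ∈ S ∨ R' ∈ (∅ : Finset (Set X))) ∧ x ∈ R' ∧
          |setAvg μ R f| ≤ |setAvg μ R' f|} ⊆ {x ∈ R | g x > l} := by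
        rintro x ⟨hxR, R', hR'mem, hxR', hle⟩
        rcases hR'mem with hR'S | h
        · exact ⟨hxR, lt_of_lt_of_le (lt_of_lt_of_le hcon hle) (hgmem R' hR'S x hxR')⟩
        · exact absurd h (Finset.notMem_empty R')
      have h1 : ENNReal.ofReal (1 / 2) * μ R <
          μ {x | x ∈ R ∧ ∃ R', (R' ∈ S ∨ R' ∈ (∅ : Finset (Set X))) ∧ x ∈ R' ∧
            |setAvg μ R f| ≤ |setAvg μ R' f|} := by
        have hlt : μ R < 2 * μ {x | x ∈ R ∧ ∃ R', (R' ∈ S ∨ R' ∈ (∅ : Finset (Set X))) ∧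
            x ∈ R' ∧ |setAvg μ R f| ≤ |setAvg μ R' f|} := hdR
        have step : ENNReal.ofReal (1 / 2) * μ R <
            ENNReal.ofReal (1 / 2) * (2 * μ {x | x ∈ R ∧ ∃ R', (R' ∈ S ∨
              R' ∈ (∅ : Finset (Set X))) ∧ x ∈ R' ∧ |setAvg μ R f| ≤ |setAvg μ R' f|}) := by
          refine (ENNReal.mul_lt_mul_iff_right ?_ ENNReal.ofReal_ne_top).mpr hlt
          exact (ENNReal.ofReal_pos.mpr (by norm_num)).ne'
        refine step.trans_le (le_of_eq ?_)
        rw [← mul_assoc, hhalf, one_mul]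
      have h2 := measure_mono (μ := μ) hWsub
      have hl' : μ {x ∈ R | g x > l} ≤ ENNReal.ofReal (1 / 2) * μ R := hl
      exact absurd hl' (not_le.mpr (lt_of_lt_of_le h1 h2))
  have hperc0 : ∀ R ∈ E, 0 ≤ setPerc μ R (1 / 2) g :=
    fun R hR => (abs_nonneg _).trans (hperc R hR)
  intro x
  set C : ℝ := ∑ R ∈ E, |setPerc μ R (1 / 2) g| with hCdef
  have hC0 : 0 ≤ C := Finset.sum_nonneg (fun _ _ => abs_nonneg _)
  have hCi : ∀ R ∈ E, |setPerc μ R (1 / 2) g| ≤ C := by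
    intro R h
    rw [hCdef]
    exact Finset.single_le_sum (f := fun R'' => |setPerc μ R'' (1 / 2) g|)
      (fun i _ => abs_nonneg _) h
  have hbddE : BddAbove (Set.range fun R =>
      ⨆ (_ : R ∈ E), Set.indicator R (fun _ => setPerc μ R (1 / 2) g) x) := by
    refine ⟨C, ?_⟩
    rintro _ ⟨R, rfl⟩
    exact Real.iSup_le (fun h =>
      Set.indicator_apply_le' (fun _ => (le_abs_self _).trans (hCi R h)) (fun _ => hC0)) hC0
  have hRHS0 : 0 ≤ ⨆ R ∈ E, Set.indicator R (fun _ => setPerc μ R (1 / 2) g) x :=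
    Real.iSup_nonneg fun R => Real.iSup_nonneg fun hR =>
      Set.indicator_nonneg (fun _ _ => hperc0 R hR) x
  refine Real.iSup_le (fun R => Real.iSup_le (fun hRE => ?_) hRHS0) hRHS0
  refine Set.indicator_apply_le' (fun hxR => ?_) (fun _ => hRHS0)
  calc |setAvg μ R f|
      ≤ setPerc μ R (1 / 2) g := hperc R hRE
    _ = Set.indicator R (fun _ => setPerc μ R (1 / 2) g) x := (Set.indicator_of_mem hxR (fun _ => setPerc μ R (1 / 2) g)).symm
    _ = ⨆ (_ : R ∈ E), Set.indicator R (fun _ => setPerc μ R (1 / 2) g) x := by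
        haveI : Nonempty (R ∈ E) := ⟨hRE⟩
        exact ciSup_const.symm
    _ ≤ ⨆ R ∈ E, Set.indicator R (fun _ => setPerc μ R (1 / 2) g) x := le_ciSup hbddE R
end
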